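/- arXiv:2108.07604 — 8 statements merged into one kernel-verified Lean document; each statement's English description precedes it below -/
import Mathlib

section
/- The function Ψ is invariant under the coordinate form T of the 3-diagonal pentagram map: for every (x,y) ∈ ℝ² with xy ≠ 0, at which T is defined, and such that the image point (x',y') = T(x,y) satisfies x'y' ≠ 0, one has Ψ(T(x,y)) = Ψ(x,y). -/
/-- Denominator whose nonvanishing defines the domain of the 3-diagonal map `T`. -/
noncomputable def tDen (x y : ℝ) : ℝ :=
  (1 + (x + y)) *
    ((x ^ 2 + y ^ 2) + 2 * (x ^ 3 + y ^ 3) + (x ^ 4 + y ^ 4)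
      - 2 * (x * y) - 2 * (x * y ^ 2 + y * x ^ 2) + 2 * (x ^ 2 * y ^ 2))

/-- The coefficient `A` of the 3-diagonal pentagram map. -/
noncomputable def tA (x y : ℝ) : ℝ := ((x + y) + (x ^ 2 + y ^ 2)) / tDen x y

/-- The quantity `B` of the 3-diagonal pentagram map. -/
noncomputable def tB (x y : ℝ) : ℝ :=
  (x - y) + 2 * (x ^ 2 - y ^ 2) + (x ^ 3 - y ^ 3) + (x * y ^ 2 - y * x ^ 2)

/-- The 3-diagonal pentagram map on octagons with 4-fold rotational symmetry,
in coordinates: `T(x,y) = (-Ax(B - 2xy), Ay(B + 2xy))`. -/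
noncomputable def T (p : ℝ × ℝ) : ℝ × ℝ :=
  (-(tA p.1 p.2) * p.1 * (tB p.1 p.2 - 2 * p.1 * p.2),
    (tA p.1 p.2) * p.2 * (tB p.1 p.2 + 2 * p.1 * p.2))

/-- The invariant `Ψ(x,y) = (x-y)(x²+y²-1)/(xy)`. -/
noncomputable def Psi (p : ℝ × ℝ) : ℝ :=
  ((p.1 - p.2) * (p.1 ^ 2 + p.2 ^ 2 - 1)) / (p.1 * p.2)

set_option maxHeartbeats 4000000 in
private lemma key_identity (x y : ℝ) :
    let S := (x + y) + (x ^ 2 + y ^ 2)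
    let B := (x - y) + 2 * (x ^ 2 - y ^ 2) + (x ^ 3 - y ^ 3) + (x * y ^ 2 - y * x ^ 2)
    let D := (1 + (x + y)) *
      ((x ^ 2 + y ^ 2) + 2 * (x ^ 3 + y ^ 3) + (x ^ 4 + y ^ 4)
        - 2 * (x * y) - 2 * (x * y ^ 2 + y * x ^ 2) + 2 * (x ^ 2 * y ^ 2))
    let P := -x * S * (B - 2 * x * y)
    let Q := y * S * (B + 2 * x * y)
    (P - Q) * (P ^ 2 + Q ^ 2 - D ^ 2) * (x * y)
      = (x - y) * (x ^ 2 + y ^ 2 - 1) * (P * Q) * D := by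
  ring

set_option maxHeartbeats 4000000 in
/-- Ψ is invariant under the coordinate form `T` of the 3-diagonal pentagram map. -/
theorem psi_invariant_under_T (x y : ℝ) (hxy : x * y ≠ 0) (hdef : tDen x y ≠ 0)
    (himg : (T (x, y)).1 * (T (x, y)).2 ≠ 0) :
    Psi (T (x, y)) = Psi (x, y) := by
  have key := key_identity x y
  simp only at key
  set S := (x + y) + (x ^ 2 + y ^ 2) with hSdef
  set B := (x - y) + 2 * (x ^ 2 - y ^ 2) + (x ^ 3 - y ^ 3) + (x * y ^ 2 - y * x ^ 2) with hBdef
  set D := (1 + (x + y)) *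
      ((x ^ 2 + y ^ 2) + 2 * (x ^ 3 + y ^ 3) + (x ^ 4 + y ^ 4)
        - 2 * (x * y) - 2 * (x * y ^ 2 + y * x ^ 2) + 2 * (x ^ 2 * y ^ 2)) with hDdef
  have hD : D ≠ 0 := hdef
  have hX1 : (T (x, y)).1 = (-x * S * (B - 2 * x * y)) / D := by
    simp only [T, tA, tB, tDen, ← hSdef, ← hBdef, ← hDdef]
    ring
  have hX2 : (T (x, y)).2 = (y * S * (B + 2 * x * y)) / D := by
    simp only [T, tA, tB, tDen, ← hSdef, ← hBdef, ← hDdef]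
    ring
  set P := -x * S * (B - 2 * x * y) with hPdef
  set Q := y * S * (B + 2 * x * y) with hQdef
  rw [hX1, hX2] at himg
  have hP : P ≠ 0 := fun h => himg (by rw [h]; simp)
  have hQ : Q ≠ 0 := fun h => himg (by rw [h]; simp)
  simp only [Psi, hX1, hX2]
  rw [div_eq_div_iff (by exact himg) hxy]
  field_simp
  linear_combination key
end

section
/- For every λ ∈ ℂ with λ ∉ {0, 2, −2, 4i√2, −4i√2}, the projective cubic curve E_λ = {V_λ = 0} is nonsingular: for every (x,y,z) ∈ ℂ³ with (x,y,z) ≠ (0,0,0) and V_λ(x,y,z) = 0, the gradient (∂V_λ/∂x, ∂V_λ/∂y, ∂V_λ/∂z)(x,y,z) ≠ (0,0,0). -/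
/-- The homogeneous cubic `V_λ(x,y,z) = x³ - y³ - x²y + xy² - xz² + yz² - λxyz` over ℂ. -/
def Vc (l x y z : ℂ) : ℂ :=
  x ^ 3 - y ^ 3 - x ^ 2 * y + x * y ^ 2 - x * z ^ 2 + y * z ^ 2 - l * x * y * z

/-- For λ ∉ {0, ±2, ±4i√2}, the projective cubic curve `V_λ = 0` is nonsingular:
the gradient of `V_λ` does not vanish at any nonzero point of the zero set. -/
theorem E_lambda_nonsingular (l : ℂ) (h0 : l ≠ 0) (h2 : l ≠ 2) (h2' : l ≠ -2)
    (h4 : l ≠ 4 * Complex.I * (Real.sqrt 2 : ℂ))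
    (h4' : l ≠ -(4 * Complex.I * (Real.sqrt 2 : ℂ)))
    (x y z : ℂ) (hne : (x, y, z) ≠ (0, 0, 0)) (hV : Vc l x y z = 0) :
    (3 * x ^ 2 - 2 * x * y + y ^ 2 - z ^ 2 - l * y * z,
     -x ^ 2 + 2 * x * y - 3 * y ^ 2 + z ^ 2 - l * x * z,
     2 * z * (y - x) - l * x * y) ≠ (0, 0, 0) := by
  intro hgrad
  rw [Prod.mk.injEq, Prod.mk.injEq] at hgrad
  obtain ⟨e1, e2, e3⟩ := hgrad
  have hI : Complex.I ^ 2 = -1 := Complex.I_sq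
  have hs : ((Real.sqrt 2 : ℝ) : ℂ) ^ 2 = 2 := by
    norm_cast
    rw [Real.sq_sqrt] ; norm_num
  -- First, z ≠ 0.
  have hz : z ≠ 0 := by
    intro hz0
    subst hz0
    have hxy : l * (x * y) = 0 := by linear_combination -e3
    rcases mul_eq_zero.mp hxy with h | hxy
    · exact h0 h
    rcases mul_eq_zero.mp hxy with hx | hy
    · have hy2 : y ^ 2 = 0 := by linear_combination e1 - (3 * x - 2 * y) * hx
      have hy : y = 0 := by
        have := pow_eq_zero_iff (n := 2) (by norm_num) |>.mp hy2
        exact this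
      exact hne (by simp [hx, hy])
    · have hx2 : x ^ 2 = 0 := by
        have h3 : 3 * x ^ 2 = 0 := by linear_combination e1 + (2 * x - y) * hy
        linear_combination h3 / 3
      have hx : x = 0 := pow_eq_zero_iff (n := 2) (by norm_num) |>.mp hx2
      exact hne (by simp [hx, hy])
  have hsum : (x + y) * (2 * (x - y) - l * z) = 0 := by linear_combination e1 + e2
  rcases mul_eq_zero.mp hsum with hA | hB
  · -- Case x + y = 0
    have hx : x ≠ 0 := by
      intro hx
      have hy : y = 0 := by linear_combination hA - hx
      have hz2 : z ^ 2 = 0 := by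
        linear_combination -e1 + (3 * x - 2 * y) * hx + (y - l * z) * hy
      exact hz (pow_eq_zero_iff (n := 2) (by norm_num) |>.mp hz2)
    have h4z : l * x = 4 * z := by
      have hfac : x * (l * x - 4 * z) = 0 := by
        linear_combination e3 + (l * x - 2 * z) * hA
      rcases mul_eq_zero.mp hfac with h | h
      · exact absurd h hx
      · linear_combination h
    have key : x ^ 2 * (3 * l ^ 2 + 96) = 0 := by
      linear_combination 16 * e1 + (48 * x - 16 * y + 16 * l * z) * hA +
        (3 * l * x - 4 * z) * h4z
    rcases mul_eq_zero.mp key with h | h32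
    · exact hx (pow_eq_zero_iff (n := 2) (by norm_num) |>.mp h)
    · have hfac : (l - 4 * Complex.I * (Real.sqrt 2 : ℂ)) *
          (l + 4 * Complex.I * (Real.sqrt 2 : ℂ)) = 0 := by
        linear_combination h32 / 3 - 16 * ((Real.sqrt 2 : ℝ) : ℂ) ^ 2 * hI + 16 * hs
      rcases mul_eq_zero.mp hfac with h | h
      · exact h4 (by linear_combination h)
      · exact h4' (by linear_combination h)
  · -- Case 2(x - y) = l z
    have hz2 : z ^ 2 = 3 * x ^ 2 - 4 * x * y + 3 * y ^ 2 := by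
      linear_combination (-1 / 2 : ℂ) * e1 + (1 / 2 : ℂ) * e2 - ((x - y) / 2) * hB
    have hsplit : (y - x) * (z ^ 2 + x * y) = 0 := by
      linear_combination (z / 2) * e3 - (x * y / 2) * hB
    rcases mul_eq_zero.mp hsplit with hyx | hzxy
    · have hlz : l * z = 0 := by linear_combination -hB - 2 * hyx
      rcases mul_eq_zero.mp hlz with h | h
      · exact h0 h
      · exact hz h
    · have hQ : x ^ 2 - x * y + y ^ 2 = 0 := by
        linear_combination (1 / 3 : ℂ) * hzxy - (1 / 3 : ℂ) * hz2
      have hx0 : x ≠ 0 := by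
        intro hx
        have hz2' : z ^ 2 = 0 := by linear_combination hzxy - y * hx
        exact hz (pow_eq_zero_iff (n := 2) (by norm_num) |>.mp hz2')
      have hy0 : y ≠ 0 := by
        intro hy
        have hz2' : z ^ 2 = 0 := by linear_combination hzxy - x * hy
        exact hz (pow_eq_zero_iff (n := 2) (by norm_num) |>.mp hz2')
      have ha : l * (y * z) = 2 * x ^ 2 := by linear_combination -e1 - hzxy + hQ
      have hb : l * (x * z) = -(2 * y ^ 2) := by linear_combination -e2 + hzxy - hQ
      have hl4 : (l - 2) * (l + 2) * (x ^ 2 * y ^ 2) = 0 := by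
        linear_combination -(l * x * z) * ha - 2 * x ^ 2 * hb + l ^ 2 * (x * y) * hzxy
      rcases mul_eq_zero.mp hl4 with h | h
      · rcases mul_eq_zero.mp h with h | h
        · exact h2 (by linear_combination h)
        · exact h2' (by linear_combination h)
      · rcases mul_eq_zero.mp h with h | h
        · exact hx0 (pow_eq_zero_iff (n := 2) (by norm_num) |>.mp h)
        · exact hy0 (pow_eq_zero_iff (n := 2) (by norm_num) |>.mp h)
end

section
/- For every λ ∈ ℝ with λ ∉ {−2, 0, 2}, the set of real projective points E_λ(ℝ) = { [x:y:z] ∈ ℝP² : V_λ(x,y,z) = 0 } (well-defined by homogeneity of V_λ) has exactly two connected components, each invariant under the reflection [x:y:z] ↦ [−y:−x:z]; exactly one of the two components is contained in the affine chart { [x:y:z] : z ≠ 0 }. -/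
/-- The homogeneous cubic `V_λ(x,y,z) = x³ - y³ - x²y + xy² - xz² + yz² - λxyz` over ℝ. -/
def Vr (l x y z : ℝ) : ℝ :=
  x ^ 3 - y ^ 3 - x ^ 2 * y + x * y ^ 2 - x * z ^ 2 + y * z ^ 2 - l * x * y * z

/-- The set of real projective points of the cubic curve `E_λ`.  (By homogeneity of
`V_λ`, membership does not depend on the choice of representative `p.rep`.) -/
noncomputable def Epts (l : ℝ) : Set (Projectivization ℝ (Fin 3 → ℝ)) :=
  {p | Vr l (p.rep 0) (p.rep 1) (p.rep 2) = 0}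

/-- The linear map `(x,y,z) ↦ (-y,-x,z)` inducing the reflection in the line `y = -x`. -/
def reflLin : (Fin 3 → ℝ) →ₗ[ℝ] (Fin 3 → ℝ) where
  toFun v := ![-v 1, -v 0, v 2]
  map_add' a b := by
    funext i; fin_cases i <;> simp <;> ring
  map_smul' c a := by
    funext i; fin_cases i <;> simp [mul_comm]

theorem reflLin_injective : Function.Injective reflLin := by
  intro a b h
  have h0 := congrFun h 0
  have h1 := congrFun h 1
  have h2 := congrFun h 2
  simp [reflLin] at h0 h1 h2
  funext i
  fin_cases i <;> simp [h0, h1, h2]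

/-- The quotient topology on the real projective plane. -/
noncomputable instance : TopologicalSpace (Projectivization ℝ (Fin 3 → ℝ)) :=
  instTopologicalSpaceQuotient

/-- The reflection `[x:y:z] ↦ [-y:-x:z]` of the real projective plane. -/
noncomputable def reflRho : Projectivization ℝ (Fin 3 → ℝ) → Projectivization ℝ (Fin 3 → ℝ) :=
  Projectivization.map reflLin reflLin_injective

/- ############ auxiliary development ############ -/

open Projectivization

noncomputable section EL

abbrev RP2 := Projectivization ℝ (Fin 3 → ℝ)

/-! ### scale invariant conditions -/

def MM (l : ℝ) : ℝ := (|l| + 3) ^ 2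

def cA (l x y z : ℝ) : Prop :=
  l * (x - y) * z ≤ 0 ∧ (x + y) ^ 2 ≤ MM l * z ^ 2

def cB (l x y z : ℝ) : Prop :=
  0 ≤ l * (x - y) * z ∧
    l * (2 * (x - y) * z - l * z ^ 2) *
      (2 * (x - y) ^ 2 + l * (x - y) * z - 4 * z ^ 2) ≤ 0

lemma cA_smul (l : ℝ) {c : ℝ} (hc : c ≠ 0) (x y z : ℝ) :
    cA l (c * x) (c * y) (c * z) ↔ cA l x y z := by
  have hc2 : (0:ℝ) < c ^ 2 := by positivity
  unfold cA
  constructor <;> rintro ⟨h1, h2⟩ <;> constructor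
  · nlinarith
  · nlinarith
  · nlinarith
  · nlinarith

lemma cB_smul (l : ℝ) {c : ℝ} (hc : c ≠ 0) (x y z : ℝ) :
    cB l (c * x) (c * y) (c * z) ↔ cB l x y z := by
  have hc2 : (0:ℝ) < c ^ 2 := by positivity
  have hc4 : (0:ℝ) < c ^ 4 := by positivity
  unfold cB
  constructor <;> rintro ⟨h1, h2⟩ <;> constructor
  · nlinarith
  · nlinarith
  · nlinarith
  · nlinarith

lemma Vr_smul (l c x y z : ℝ) : Vr l (c * x) (c * y) (c * z) = c ^ 3 * Vr l x y z := by
  unfold Vr; ring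

lemma Vr_smul_zero (l : ℝ) {c : ℝ} (hc : c ≠ 0) (x y z : ℝ) :
    Vr l (c * x) (c * y) (c * z) = 0 ↔ Vr l x y z = 0 := by
  rw [Vr_smul]
  constructor
  · intro h
    rcases mul_eq_zero.1 h with h' | h'
    · exact absurd h' (pow_ne_zero _ hc)
    · exact h'
  · intro h; rw [h, mul_zero]

lemma rep_mk_rel (w : Fin 3 → ℝ) (hw : w ≠ 0) :
    ∃ c : ℝ, c ≠ 0 ∧ (Projectivization.mk ℝ w hw).rep = c • w := by
  have h := Projectivization.mk_rep (Projectivization.mk ℝ w hw)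
  rw [Projectivization.mk_eq_mk_iff] at h
  obtain ⟨a, ha⟩ := h
  exact ⟨(a : ℝ), a.ne_zero, ha.symm⟩

lemma smul_apply3 (c : ℝ) (w : Fin 3 → ℝ) (i : Fin 3) : (c • w) i = c * w i := rfl

lemma cond_rep_iff (P : ℝ → ℝ → ℝ → Prop)
    (hinv : ∀ (c : ℝ), c ≠ 0 → ∀ x y z, P (c*x) (c*y) (c*z) ↔ P x y z)
    (w : Fin 3 → ℝ) (hw : w ≠ 0) :
    (P ((Projectivization.mk ℝ w hw).rep 0) ((Projectivization.mk ℝ w hw).rep 1)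
      ((Projectivization.mk ℝ w hw).rep 2)) ↔ P (w 0) (w 1) (w 2) := by
  obtain ⟨c, hc, hrep⟩ := rep_mk_rel w hw
  rw [hrep]
  simpa [smul_apply3] using hinv c hc (w 0) (w 1) (w 2)

lemma isClosed_repSet (P : ℝ → ℝ → ℝ → Prop)
    (hinv : ∀ (c : ℝ), c ≠ 0 → ∀ x y z, P (c*x) (c*y) (c*z) ↔ P x y z)
    (hS : IsClosed {w : Fin 3 → ℝ | P (w 0) (w 1) (w 2)}) :
    IsClosed {p : RP2 | P (p.rep 0) (p.rep 1) (p.rep 2)} := by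
  have hq : Topology.IsQuotientMap
      (fun (v : {v : Fin 3 → ℝ // v ≠ 0}) => Projectivization.mk ℝ v.val v.prop) :=
    isQuotientMap_quotient_mk'
  rw [← hq.isClosed_preimage]
  have : (fun (v : {v : Fin 3 → ℝ // v ≠ 0}) => Projectivization.mk ℝ v.val v.prop) ⁻¹'
      {p : RP2 | P (p.rep 0) (p.rep 1) (p.rep 2)}
      = {v : {v : Fin 3 → ℝ // v ≠ 0} | P (v.val 0) (v.val 1) (v.val 2)} := by
    ext v
    exact cond_rep_iff P hinv v.val v.prop
  rw [this]
  exact hS.preimage continuous_subtype_val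

/-! ### the u,v,z coordinates -/

def Eu (l u v z : ℝ) : ℝ := v ^ 2 * (2 * u - l * z) + 2 * u ^ 3 + l * u ^ 2 * z - 4 * u * z ^ 2
def cAu (l u v z : ℝ) : Prop := l * u * z ≤ 0 ∧ v ^ 2 ≤ MM l * z ^ 2
def cBu (l u z : ℝ) : Prop :=
  0 ≤ l * u * z ∧ l * (2 * u * z - l * z ^ 2) * (2 * u ^ 2 + l * u * z - 4 * z ^ 2) ≤ 0

lemma Eu_of_xyz (l x y z : ℝ) : Eu l (x - y) (x + y) z = 4 * Vr l x y z := by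
  unfold Eu Vr; ring

lemma cA_iff_cAu (l x y z : ℝ) : cA l x y z ↔ cAu l (x - y) (x + y) z := Iff.rfl
lemma cB_iff_cBu (l x y z : ℝ) : cB l x y z ↔ cBu l (x - y) z := Iff.rfl

lemma MM_nonneg (l : ℝ) : 0 ≤ MM l := by unfold MM; positivity
lemma MM_neg (l : ℝ) : MM (-l) = MM l := by unfold MM; rw [abs_neg]

lemma boundA1pos {l u v : ℝ} (hl : 0 < l) (huz : l * u ≤ 0)
    (hE : Eu l u v 1 = 0) : v ^ 2 ≤ MM l := by
  have hu : u ≤ 0 := nonpos_of_mul_nonpos_right (by linarith) hl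
  set t := -u with ht
  have ht0 : 0 ≤ t := by simp [ht]; linarith
  have hE' : v ^ 2 * (l + 2 * t) = t * (4 + l * t - 2 * t ^ 2) := by
    unfold Eu at hE; simp only [ht]; linear_combination -hE
  have hMM : MM l = (l + 3) ^ 2 := by unfold MM; rw [abs_of_pos hl]
  rcases eq_or_lt_of_le ht0 with h0 | htpos
  · have : v ^ 2 * l = 0 := by rw [← h0] at hE'; linarith [hE']
    have hv : v ^ 2 = 0 := by
      rcases mul_eq_zero.1 this with h | h
      · exact h
      · exact absurd h (ne_of_gt hl)
    rw [hv, hMM]; positivity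
  · have h1 : 0 ≤ 4 + l * t - 2 * t ^ 2 := by nlinarith [sq_nonneg v]
    have h2 : t ≤ (l + 3) / 2 := by nlinarith
    have h3 : v ^ 2 ≤ 2 + l * t / 2 := by nlinarith [sq_nonneg v]
    rw [hMM]; nlinarith

lemma boundA1 {l u v : ℝ} (hl : l ≠ 0) (huz : l * u ≤ 0)
    (hE : Eu l u v 1 = 0) : v ^ 2 ≤ MM l := by
  rcases hl.lt_or_gt with h | h
  · have h' : 0 < -l := by linarith
    have huz' : (-l) * (-u) ≤ 0 := by nlinarith
    have hE' : Eu (-l) (-u) v 1 = 0 := by unfold Eu at *; linear_combination -hE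
    have := boundA1pos h' huz' hE'
    rwa [MM_neg] at this
  · exact boundA1pos h huz hE

lemma coverR {l u v z : ℝ} (hl : l ≠ 0) (hE : Eu l u v z = 0) :
    cAu l u v z ∨ cBu l u z := by
  by_cases hz : z = 0
  · right
    constructor
    · simp [hz]
    · simp [hz]
  · by_cases hsig : l * u * z ≤ 0
    · left
      refine ⟨hsig, ?_⟩
      have hz2 : (0:ℝ) < z ^ 2 := by positivity
      have hE1 : Eu l (u / z) (v / z) 1 = 0 := by
        have heq : Eu l (u / z) (v / z) 1 = Eu l u v z / z ^ 3 := by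
          unfold Eu; field_simp
        rw [heq, hE, zero_div]
      have hsig1 : l * (u / z) ≤ 0 := by
        have : l * (u / z) = (l * u * z) / z ^ 2 := by field_simp
        rw [this]
        exact div_nonpos_of_nonpos_of_nonneg hsig (le_of_lt hz2)
      have := boundA1 hl hsig1 hE1
      have hvz : (v / z) ^ 2 = v ^ 2 / z ^ 2 := by rw [div_pow]
      rw [hvz, div_le_iff₀ hz2] at this
      linarith [this]
    · push_neg at hsig
      right
      refine ⟨le_of_lt hsig, ?_⟩
      by_contra hH
      push_neg at hH
      have key : (l * u * z) * (l * (2 * u * z - l * z ^ 2) *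
          (2 * u ^ 2 + l * u * z - 4 * z ^ 2)) = -(v * l * z * (2 * u - l * z)) ^ 2 := by
        unfold Eu at hE
        linear_combination (l ^ 2 * z ^ 2 * (2 * u - l * z)) * hE
      nlinarith [mul_pos hsig hH, sq_nonneg (v * l * z * (2 * u - l * z))]

lemma disjR {l u v z : ℝ} (hl : l ≠ 0) (hne : ¬(u = 0 ∧ v = 0 ∧ z = 0))
    (hE : Eu l u v z = 0) (hA : cAu l u v z) (hB : cBu l u z) : False := by
  have h0 : l * u * z = 0 := le_antisymm hA.1 hB.1
  have huz : u = 0 ∨ z = 0 := by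
    rcases mul_eq_zero.1 h0 with h | h
    · rcases mul_eq_zero.1 h with h' | h'
      · exact absurd h' hl
      · exact Or.inl h'
    · exact Or.inr h
  rcases huz with hu | hz
  · by_cases hz : z = 0
    · have hv2 : v ^ 2 ≤ 0 := by have := hA.2; rw [hz] at this; simpa using this
      have hv : v = 0 := by nlinarith [sq_nonneg v]
      exact hne ⟨hu, hv, hz⟩
    · have := hB.2
      rw [hu] at this
      have hz4 : (0:ℝ) < z ^ 4 := by positivity
      have hl2 : (0:ℝ) < l ^ 2 := by rcases hl.lt_or_gt with h | h <;> nlinarith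
      nlinarith [mul_pos hl2 hz4]
  · have hv2 : v ^ 2 ≤ 0 := by have := hA.2; rw [hz] at this; simpa using this
    have hv : v = 0 := by nlinarith [sq_nonneg v]
    have hu : u = 0 := by
      unfold Eu at hE
      rw [hz, hv] at hE
      have : 2 * u ^ 3 = 0 := by linarith [hE]
      have hu3 : u ^ 3 = 0 := by linarith
      exact pow_eq_zero_iff (by norm_num) |>.1 hu3
    exact hne ⟨hu, hv, hz⟩

/-! ### vectors and paths -/

def P3 (u v z : ℝ) : Fin 3 → ℝ := ![u + v, v - u, 2 * z]

lemma P3_apply0 (u v z : ℝ) : P3 u v z 0 = u + v := rfl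
lemma P3_apply1 (u v z : ℝ) : P3 u v z 1 = v - u := rfl
lemma P3_apply2 (u v z : ℝ) : P3 u v z 2 = 2 * z := rfl

lemma P3_ne_zero_z {u v z : ℝ} (hz : z ≠ 0) : P3 u v z ≠ 0 := by
  intro h
  have := congrFun h 2
  simp [P3] at this
  exact hz this

lemma P3_ne_zero_v {u v z : ℝ} (hv : v ≠ 0) : P3 u v z ≠ 0 := by
  intro h
  have h0 := congrFun h 0
  have h1 := congrFun h 1
  simp [P3] at h0 h1
  apply hv; linarith

lemma P3_smul (c u v z : ℝ) : c • P3 u v z = P3 (c * u) (c * v) (c * z) := by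
  funext i; fin_cases i <;> simp [P3] <;> ring

lemma mk_congr {w w' : Fin 3 → ℝ} (h : w = w') (hw : w ≠ 0) (hw' : w' ≠ 0) :
    Projectivization.mk ℝ w hw = Projectivization.mk ℝ w' hw' := by subst h; rfl

lemma mk_smul_eq (w : Fin 3 → ℝ) (hw : w ≠ 0) {c : ℝ} (hc : c ≠ 0) (hw' : c • w ≠ 0) :
    Projectivization.mk ℝ (c • w) hw' = Projectivization.mk ℝ w hw :=
  (Projectivization.mk_eq_mk_iff ℝ _ _ _ _).2 ⟨Units.mk0 c hc, rfl⟩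

lemma continuous_vec3 {X : Type*} [TopologicalSpace X] {f g h : X → ℝ}
    (hf : Continuous f) (hg : Continuous g) (hh : Continuous h) :
    Continuous fun x => (![f x, g x, h x] : Fin 3 → ℝ) := by
  apply continuous_pi; intro i
  fin_cases i <;> simpa

lemma continuous_mk_comp {X : Type*} [TopologicalSpace X] {f : X → (Fin 3 → ℝ)}
    (hf : Continuous f) (h : ∀ x, f x ≠ 0) :
    Continuous fun x => Projectivization.mk ℝ (f x) (h x) :=
  continuous_quotient_mk'.comp (hf.subtype_mk h)

def clamp (t : ℝ) : ℝ := max 0 (min 1 t)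

lemma clamp_mem (t : ℝ) : 0 ≤ clamp t ∧ clamp t ≤ 1 := by
  constructor
  · exact le_max_left _ _
  · exact max_le (by norm_num) (min_le_left _ _)

lemma clamp_zero : clamp 0 = 0 := by norm_num [clamp]
lemma clamp_one : clamp 1 = 1 := by norm_num [clamp]
lemma continuous_clamp : Continuous clamp :=
  continuous_const.max (continuous_const.min continuous_id)

lemma seg_mem_uIcc (u₀ u₁ t : ℝ) : u₀ + clamp t * (u₁ - u₀) ∈ Set.uIcc u₀ u₁ := by
  obtain ⟨h0, h1⟩ := clamp_mem t
  rcases le_total u₀ u₁ with h | h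
  · rw [Set.uIcc_of_le h]
    constructor <;> nlinarith
  · rw [Set.uIcc_of_ge h]
    constructor <;> nlinarith

lemma joined_family (q : ℝ → ℝ) (u₀ u₁ : ℝ) (hq : ContinuousOn q (Set.uIcc u₀ u₁)) (σ : ℝ)
    (T : Set RP2)
    (hmem : ∀ s ∈ Set.uIcc u₀ u₁,
      Projectivization.mk ℝ (P3 s (σ * Real.sqrt (q s)) 1) (P3_ne_zero_z one_ne_zero) ∈ T) :
    JoinedIn T
      (Projectivization.mk ℝ (P3 u₀ (σ * Real.sqrt (q u₀)) 1) (P3_ne_zero_z one_ne_zero))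
      (Projectivization.mk ℝ (P3 u₁ (σ * Real.sqrt (q u₁)) 1) (P3_ne_zero_z one_ne_zero)) := by
  set st : ℝ → ℝ := fun t => u₀ + clamp t * (u₁ - u₀) with hst
  have hstc : Continuous st := by
    exact continuous_const.add (continuous_clamp.mul continuous_const)
  have hstm : ∀ t, st t ∈ Set.uIcc u₀ u₁ := fun t => seg_mem_uIcc u₀ u₁ t
  have hqst : Continuous fun t => q (st t) := hq.comp_continuous hstc hstm
  set F : ℝ → RP2 := fun t =>
    Projectivization.mk ℝ (P3 (st t) (σ * Real.sqrt (q (st t))) 1) (P3_ne_zero_z one_ne_zero)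
      with hF
  have hFc : Continuous F := by
    apply continuous_mk_comp
    unfold P3
    apply continuous_vec3
    · exact hstc.add (continuous_const.mul hqst.sqrt)
    · exact (continuous_const.mul hqst.sqrt).sub hstc
    · exact continuous_const
  have hmem' : ∀ t : unitInterval, F t ∈ T := fun t => hmem (st t) (hstm t)
  have h0 : F 0 = Projectivization.mk ℝ (P3 u₀ (σ * Real.sqrt (q u₀)) 1)
      (P3_ne_zero_z one_ne_zero) := by
    apply mk_congr
    have : st 0 = u₀ := by simp [hst, clamp_zero]
    rw [this]
  have h1 : F 1 = Projectivization.mk ℝ (P3 u₁ (σ * Real.sqrt (q u₁)) 1)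
      (P3_ne_zero_z one_ne_zero) := by
    apply mk_congr
    have : st 1 = u₁ := by simp [hst, clamp_one]
    rw [this]
  have : JoinedIn T (F 0) (F 1) := by
    refine ⟨⟨⟨fun t => F t, hFc.comp continuous_subtype_val⟩, rfl, rfl⟩, fun t => hmem' t⟩
  rw [h0, h1] at this
  exact this

lemma joined_family_inf (d : ℝ → ℝ) (u₀ u₁ : ℝ) (hd : ContinuousOn d (Set.uIcc u₀ u₁)) (σ : ℝ)
    (T : Set RP2)
    (hmem : ∀ s ∈ Set.uIcc u₀ u₁,
      Projectivization.mk ℝ (P3 (σ * Real.sqrt (d s) * s) 1 (σ * Real.sqrt (d s)))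
        (P3_ne_zero_v one_ne_zero) ∈ T) :
    JoinedIn T
      (Projectivization.mk ℝ (P3 (σ * Real.sqrt (d u₀) * u₀) 1 (σ * Real.sqrt (d u₀)))
        (P3_ne_zero_v one_ne_zero))
      (Projectivization.mk ℝ (P3 (σ * Real.sqrt (d u₁) * u₁) 1 (σ * Real.sqrt (d u₁)))
        (P3_ne_zero_v one_ne_zero)) := by
  set st : ℝ → ℝ := fun t => u₀ + clamp t * (u₁ - u₀) with hst
  have hstc : Continuous st := by
    exact continuous_const.add (continuous_clamp.mul continuous_const)
  have hstm : ∀ t, st t ∈ Set.uIcc u₀ u₁ := fun t => seg_mem_uIcc u₀ u₁ t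
  have hdst : Continuous fun t => d (st t) := hd.comp_continuous hstc hstm
  set c : ℝ → ℝ := fun t => σ * Real.sqrt (d (st t)) with hc
  have hcc : Continuous c := continuous_const.mul hdst.sqrt
  set F : ℝ → RP2 := fun t =>
    Projectivization.mk ℝ (P3 (c t * st t) 1 (c t)) (P3_ne_zero_v one_ne_zero) with hF
  have hFc : Continuous F := by
    apply continuous_mk_comp
    unfold P3
    apply continuous_vec3
    · exact (hcc.mul hstc).add continuous_const
    · exact continuous_const.sub (hcc.mul hstc)
    · exact continuous_const.mul hcc
  have hmem' : ∀ t : unitInterval, F t ∈ T := fun t => hmem (st t) (hstm t)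
  have h0 : F 0 = Projectivization.mk ℝ (P3 (σ * Real.sqrt (d u₀) * u₀) 1
      (σ * Real.sqrt (d u₀))) (P3_ne_zero_v one_ne_zero) := by
    apply mk_congr
    have : st 0 = u₀ := by simp [hst, clamp_zero]
    simp only [hc, this]
  have h1 : F 1 = Projectivization.mk ℝ (P3 (σ * Real.sqrt (d u₁) * u₁) 1
      (σ * Real.sqrt (d u₁))) (P3_ne_zero_v one_ne_zero) := by
    apply mk_congr
    have : st 1 = u₁ := by simp [hst, clamp_one]
    simp only [hc, this]
  have : JoinedIn T (F 0) (F 1) := by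
    refine ⟨⟨⟨fun t => F t, hFc.comp continuous_subtype_val⟩, rfl, rfl⟩, fun t => hmem' t⟩
  rw [h0, h1] at this
  exact this

/-! ### the sets -/

def SAs (l : ℝ) : Set RP2 := {p | cA l (p.rep 0) (p.rep 1) (p.rep 2)}
def SBs (l : ℝ) : Set RP2 := {p | cB l (p.rep 0) (p.rep 1) (p.rep 2)}
def Aset (l : ℝ) : Set RP2 := Epts l ∩ SAs l
def Bset (l : ℝ) : Set RP2 := Epts l ∩ SBs l

lemma mk_mem_Epts_iff (l : ℝ) (w : Fin 3 → ℝ) (hw : w ≠ 0) :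
    Projectivization.mk ℝ w hw ∈ Epts l ↔ Vr l (w 0) (w 1) (w 2) = 0 :=
  cond_rep_iff (fun x y z => Vr l x y z = 0) (fun c hc x y z => Vr_smul_zero l hc x y z) w hw

lemma mk_mem_SAs_iff (l : ℝ) (w : Fin 3 → ℝ) (hw : w ≠ 0) :
    Projectivization.mk ℝ w hw ∈ SAs l ↔ cA l (w 0) (w 1) (w 2) :=
  cond_rep_iff (fun x y z => cA l x y z) (fun c hc x y z => cA_smul l hc x y z) w hw

lemma mk_mem_SBs_iff (l : ℝ) (w : Fin 3 → ℝ) (hw : w ≠ 0) :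
    Projectivization.mk ℝ w hw ∈ SBs l ↔ cB l (w 0) (w 1) (w 2) :=
  cond_rep_iff (fun x y z => cB l x y z) (fun c hc x y z => cB_smul l hc x y z) w hw

lemma Vr_P3 (l u v z : ℝ) :
    Vr l (P3 u v z 0) (P3 u v z 1) (P3 u v z 2) = 2 * Eu l u v z := by
  simp only [P3_apply0, P3_apply1, P3_apply2]
  unfold Vr Eu; ring

lemma cA_P3_iff (l u v z : ℝ) :
    cA l (P3 u v z 0) (P3 u v z 1) (P3 u v z 2) ↔ cAu l u v z := by
  simp only [P3_apply0, P3_apply1, P3_apply2]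
  unfold cA cAu
  constructor <;> rintro ⟨h1, h2⟩ <;> constructor <;> nlinarith

lemma cB_P3_iff (l u v z : ℝ) :
    cB l (P3 u v z 0) (P3 u v z 1) (P3 u v z 2) ↔ cBu l u z := by
  simp only [P3_apply0, P3_apply1, P3_apply2]
  unfold cB cBu
  constructor <;> rintro ⟨h1, h2⟩ <;> constructor <;> nlinarith

lemma mk_P3_mem_Aset {l u v z : ℝ} (hne : P3 u v z ≠ 0) (hE : Eu l u v z = 0)
    (hA : cAu l u v z) : Projectivization.mk ℝ (P3 u v z) hne ∈ Aset l := by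
  constructor
  · show _ ∈ Epts l
    rw [mk_mem_Epts_iff, Vr_P3, hE, mul_zero]
  · show _ ∈ SAs l
    rw [mk_mem_SAs_iff, cA_P3_iff]; exact hA

lemma mk_P3_mem_Bset {l u v z : ℝ} (hne : P3 u v z ≠ 0) (hE : Eu l u v z = 0)
    (hB : cBu l u z) : Projectivization.mk ℝ (P3 u v z) hne ∈ Bset l := by
  constructor
  · show _ ∈ Epts l
    rw [mk_mem_Epts_iff, Vr_P3, hE, mul_zero]
  · show _ ∈ SBs l
    rw [mk_mem_SBs_iff, cB_P3_iff]; exact hB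

end EL
noncomputable section EL2
open Projectivization

lemma vec_eq_zero_of_uvz {w : Fin 3 → ℝ} (hu : w 0 - w 1 = 0) (hv : w 0 + w 1 = 0)
    (hz : w 2 = 0) : w = 0 := by
  have h0 : w 0 = 0 := by linarith
  have h1 : w 1 = 0 := by linarith
  funext i; fin_cases i
  · exact h0
  · exact h1
  · exact hz

lemma rep_uvz_ne (p : RP2) :
    ¬(p.rep 0 - p.rep 1 = 0 ∧ p.rep 0 + p.rep 1 = 0 ∧ p.rep 2 = 0) :=
  fun ⟨h1, h2, h3⟩ => Projectivization.rep_nonzero p (vec_eq_zero_of_uvz h1 h2 h3)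

lemma mem_Epts_Eu {l : ℝ} {p : RP2} (hp : p ∈ Epts l) :
    Eu l (p.rep 0 - p.rep 1) (p.rep 0 + p.rep 1) (p.rep 2) = 0 := by
  rw [Eu_of_xyz, hp, mul_zero]

lemma Aset_sub_chart (l : ℝ) : Aset l ⊆ {p : RP2 | p.rep 2 ≠ 0} := by
  rintro p ⟨hE, hA⟩ hz
  have hE' := mem_Epts_Eu hE
  have hA' : cAu l (p.rep 0 - p.rep 1) (p.rep 0 + p.rep 1) (p.rep 2) := hA
  rw [hz] at hE' hA'
  have hv2 : (p.rep 0 + p.rep 1) ^ 2 ≤ 0 := by have := hA'.2; simpa using this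
  have hv : p.rep 0 + p.rep 1 = 0 := by nlinarith [sq_nonneg (p.rep 0 + p.rep 1)]
  have hu : p.rep 0 - p.rep 1 = 0 := by
    unfold Eu at hE'
    rw [hv] at hE'
    have h3 : (p.rep 0 - p.rep 1) ^ 3 = 0 := by linarith
    exact pow_eq_zero_iff (by norm_num) |>.1 h3
  exact rep_uvz_ne p ⟨hu, hv, hz⟩

lemma point_normalize (p : RP2) (hz : p.rep 2 ≠ 0) :
    p = Projectivization.mk ℝ
      (P3 ((p.rep 0 - p.rep 1) / p.rep 2) ((p.rep 0 + p.rep 1) / p.rep 2) 1)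
      (P3_ne_zero_z one_ne_zero) := by
  have hvec : P3 ((p.rep 0 - p.rep 1) / p.rep 2) ((p.rep 0 + p.rep 1) / p.rep 2) 1
      = (2 / p.rep 2) • p.rep := by
    funext i
    fin_cases i
    · show (p.rep 0 - p.rep 1)/p.rep 2 + (p.rep 0 + p.rep 1)/p.rep 2 = 2 / p.rep 2 * p.rep 0
      field_simp
      ring
    · show (p.rep 0 + p.rep 1)/p.rep 2 - (p.rep 0 - p.rep 1)/p.rep 2 = 2 / p.rep 2 * p.rep 1
      field_simp
      ring
    · show 2*(1:ℝ) = 2 / p.rep 2 * p.rep 2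
      field_simp
  have hc : (2 : ℝ) / p.rep 2 ≠ 0 := div_ne_zero two_ne_zero hz
  have h2 : ((2 / p.rep 2) • p.rep) ≠ 0 := by
    rw [← hvec]; exact P3_ne_zero_z one_ne_zero
  rw [mk_congr hvec (P3_ne_zero_z one_ne_zero) h2,
    mk_smul_eq p.rep (Projectivization.rep_nonzero p) hc h2, Projectivization.mk_rep]

lemma exists_ab {l : ℝ} (hl : 0 < l) : ∃ a : ℝ, 0 < a ∧ 2*a^2 - l*a - 4 = 0 ∧ l < 2*a := by
  have hs : Real.sqrt (l^2+32)^2 = l^2+32 := Real.sq_sqrt (by positivity)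
  have hsp : 0 < Real.sqrt (l^2+32) := Real.sqrt_pos.2 (by positivity)
  have hls : l < Real.sqrt (l^2+32) := by nlinarith
  refine ⟨(l + Real.sqrt (l^2+32))/4, by positivity, by linear_combination hs/8, by linarith⟩

lemma isPathConnected_Aset_pos {l : ℝ} (hl : 0 < l) : IsPathConnected (Aset l) := by
  obtain ⟨a, hap, ha2, hab⟩ := exists_ab hl
  have hqf : ∀ s : ℝ, 2*s^2 + l*s - 4 = 2*(s + a)*(s - (a - l/2)) := by
    intro s; linear_combination ha2
  have hbase_ne : P3 (-a) 0 1 ≠ 0 := P3_ne_zero_z one_ne_zero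
  have hEbase : Eu l (-a) 0 1 = 0 := by
    unfold Eu; linear_combination (-a)*ha2
  have hbase_mem : Projectivization.mk ℝ (P3 (-a) 0 1) hbase_ne ∈ Aset l := by
    apply mk_P3_mem_Aset _ hEbase
    constructor
    · nlinarith
    · have := MM_nonneg l; nlinarith
  -- membership of the oval arc
  have hden : ∀ s ∈ Set.Icc (-a) 0, 0 < l - 2*s := fun s hs => by
    have := hs.2; linarith
  have hqnn : ∀ s ∈ Set.Icc (-a) 0, 0 ≤ s*(2*s^2+l*s-4) / (l - 2*s) := by
    intro s hs
    apply div_nonneg _ (le_of_lt (hden s hs))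
    rw [hqf s]
    nlinarith [mul_nonneg (mul_nonneg (neg_nonneg.2 hs.2)
      (by linarith [hs.1] : (0:ℝ) ≤ s + a)) (by linarith [hs.2] : (0:ℝ) ≤ (a - l/2) - s)]
  have hmem : ∀ σ : ℝ, σ^2 = 1 → ∀ s ∈ Set.Icc (-a) 0,
      Projectivization.mk ℝ (P3 s (σ * Real.sqrt (s*(2*s^2+l*s-4)/(l-2*s))) 1)
        (P3_ne_zero_z one_ne_zero) ∈ Aset l := by
    intro σ hσ s hs
    have hd := hden s hs
    have hq := hqnn s hs
    have hv2 : (σ * Real.sqrt (s*(2*s^2+l*s-4)/(l-2*s)))^2 = s*(2*s^2+l*s-4)/(l-2*s) := by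
      rw [mul_pow, hσ, one_mul, Real.sq_sqrt hq]
    have hE : Eu l s (σ * Real.sqrt (s*(2*s^2+l*s-4)/(l-2*s))) 1 = 0 := by
      unfold Eu
      rw [hv2]
      linear_combination (-1:ℝ) * div_mul_cancel₀ (s*(2*s^2+l*s-4)) (ne_of_gt hd)
    apply mk_P3_mem_Aset _ hE
    constructor
    · nlinarith [hs.2]
    · have := boundA1 (ne_of_gt hl) (by nlinarith [hs.2]) hE
      nlinarith [this]
  have hjoined : ∀ p ∈ Aset l,
      JoinedIn (Aset l) p (Projectivization.mk ℝ (P3 (-a) 0 1) hbase_ne) := by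
    intro p hp
    have hz : p.rep 2 ≠ 0 := Aset_sub_chart l hp
    have hpn := point_normalize p hz
    rw [hpn] at hp
    generalize hu₀def : (p.rep 0 - p.rep 1)/p.rep 2 = u₀ at hp hpn
    generalize hv₀def : (p.rep 0 + p.rep 1)/p.rep 2 = v₀ at hp hpn
    have hE₀ : Eu l u₀ v₀ 1 = 0 := by
      have := hp.1
      rw [mk_mem_Epts_iff, Vr_P3] at this
      linarith
    have hcA : cAu l u₀ v₀ 1 := by
      have := hp.2
      rw [mk_mem_SAs_iff, cA_P3_iff] at this
      exact this
    have hu₀0 : u₀ ≤ 0 := by nlinarith [hcA.1]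
    have hmrel : u₀*(2*u₀^2+l*u₀-4) = v₀^2*(l-2*u₀) := by
      unfold Eu at hE₀; linear_combination hE₀
    have hu₀a : -a ≤ u₀ := by
      by_contra h
      push_neg at h
      have hqpos : 0 < 2*u₀^2 + l*u₀ - 4 := by rw [hqf u₀]; nlinarith
      nlinarith [sq_nonneg v₀]
    have hd₀ : (0:ℝ) < l - 2*u₀ := by linarith
    set σ := if 0 ≤ v₀ then (1:ℝ) else -1 with hσdef
    have hσ : σ^2 = 1 := by rw [hσdef]; split_ifs <;> norm_num
    have hq₀ : u₀*(2*u₀^2+l*u₀-4)/(l-2*u₀) = v₀^2 := by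
      rw [hmrel]
      exact mul_div_cancel_right₀ _ (ne_of_gt hd₀)
    have hstart : σ * Real.sqrt (u₀*(2*u₀^2+l*u₀-4)/(l-2*u₀)) = v₀ := by
      rw [hq₀, Real.sqrt_sq_eq_abs, hσdef]
      split_ifs with h
      · rw [abs_of_nonneg h]; ring
      · rw [abs_of_neg (lt_of_not_ge h)]; ring
    have hsub : Set.uIcc u₀ (-a) ⊆ Set.Icc (-a) 0 := by
      intro s hs
      rcases Set.mem_uIcc.1 hs with ⟨h1, h2⟩ | ⟨h1, h2⟩
      · exact ⟨by linarith, by linarith⟩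
      · exact ⟨by linarith, by linarith⟩
    have hcont : ContinuousOn (fun s => s*(2*s^2+l*s-4)/(l-2*s)) (Set.uIcc u₀ (-a)) := by
      apply ContinuousOn.div
      · fun_prop
      · fun_prop
      · exact fun s hs => ne_of_gt (hden s (hsub hs))
    have hjj := joined_family (fun s => s*(2*s^2+l*s-4)/(l-2*s)) u₀ (-a) hcont σ (Aset l)
      (fun s hs => hmem σ hσ s (hsub hs))
    have hstart_eq : Projectivization.mk ℝ
        (P3 u₀ (σ * Real.sqrt (u₀*(2*u₀^2+l*u₀-4)/(l-2*u₀))) 1) (P3_ne_zero_z one_ne_zero)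
        = p := by
      rw [hpn]
      exact mk_congr (by rw [hstart]) _ _
    have hq₁ : (-a)*(2*(-a)^2+l*(-a)-4)/(l-2*(-a)) = 0 := by
      have hnum : (-a)*(2*(-a)^2+l*(-a)-4) = 0 := by linear_combination (-a)*ha2
      rw [hnum, zero_div]
    have hend_eq : Projectivization.mk ℝ
        (P3 (-a) (σ * Real.sqrt ((-a)*(2*(-a)^2+l*(-a)-4)/(l-2*(-a)))) 1)
        (P3_ne_zero_z one_ne_zero)
        = Projectivization.mk ℝ (P3 (-a) 0 1) hbase_ne := by
      apply mk_congr
      rw [hq₁, Real.sqrt_zero, mul_zero]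
    rw [hstart_eq, hend_eq] at hjj
    exact hjj
  exact ⟨_, hbase_mem, fun {p} hp => (hjoined p hp).symm⟩

end EL2
noncomputable section EL3
open Projectivization

def Pinf : RP2 := Projectivization.mk ℝ (P3 0 1 0) (P3_ne_zero_v one_ne_zero)

lemma Pinf_mem_Bset (l : ℝ) : Pinf ∈ Bset l := by
  refine mk_P3_mem_Bset _ ?_ ?_
  · unfold Eu; ring
  · unfold cBu; norm_num

lemma Pinf_rep2 : Pinf.rep 2 = 0 := by
  obtain ⟨c, hc, hrep⟩ := rep_mk_rel (P3 0 1 0) (P3_ne_zero_v one_ne_zero)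
  show Pinf.rep 2 = 0
  rw [show Pinf.rep = (Projectivization.mk ℝ (P3 0 1 0) (P3_ne_zero_v one_ne_zero)).rep from rfl,
    hrep, smul_apply3, P3_apply2]
  ring

lemma Bset_z0_eq_Pinf {l : ℝ} {p : RP2} (hp : p ∈ Bset l) (hz : p.rep 2 = 0) :
    p = Pinf := by
  have hE := mem_Epts_Eu hp.1
  rw [hz] at hE
  unfold Eu at hE
  set u := p.rep 0 - p.rep 1 with hu
  set v := p.rep 0 + p.rep 1 with hv
  have hcube : 2 * u * (v ^ 2 + u ^ 2) = 0 := by linarith [hE]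
  have hu0 : u = 0 := by
    rcases mul_eq_zero.1 hcube with h | h
    · rcases mul_eq_zero.1 h with h' | h'
      · norm_num at h'
      · exact h'
    · have h1 : v = 0 := by nlinarith [sq_nonneg u, sq_nonneg v]
      have h2 : u = 0 := by nlinarith [sq_nonneg u, sq_nonneg v]
      exact h2
  have hvne : v ≠ 0 := by
    intro h
    exact rep_uvz_ne p ⟨hu0, by rw [← hv, h], hz⟩
  have hx : p.rep 0 ≠ 0 := by
    intro h
    apply hvne
    rw [hv]
    have : p.rep 1 = 0 := by rw [hu] at hu0; linarith
    rw [h, this]; ring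
  have hrepvec : p.rep = (p.rep 0) • P3 0 1 0 := by
    funext i
    fin_cases i
    · show p.rep 0 = p.rep 0 * (0 + 1); ring
    · show p.rep 1 = p.rep 0 * (1 - 0); rw [hu] at hu0; linarith
    · show p.rep 2 = p.rep 0 * (2 * 0); rw [hz]; ring
  have h2 : (p.rep 0) • P3 0 1 0 ≠ 0 := by rw [← hrepvec]; exact Projectivization.rep_nonzero p
  calc p = Projectivization.mk ℝ p.rep (Projectivization.rep_nonzero p) :=
        (Projectivization.mk_rep p).symm
    _ = Projectivization.mk ℝ ((p.rep 0) • P3 0 1 0) h2 := mk_congr hrepvec _ _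
    _ = Pinf := mk_smul_eq _ _ hx _

/-- membership of the affine branch (z = 1 chart) in `Bset` -/
lemma memB1 {l : ℝ} (hl : 0 < l) (σ : ℝ) (hσ : σ ^ 2 = 1) (s : ℝ) (hd : l - 2 * s ≠ 0)
    (hq : 0 ≤ s * (2 * s ^ 2 + l * s - 4) / (l - 2 * s)) (hls : 0 ≤ s)
    (hsg : (2 * s - l) * (2 * s ^ 2 + l * s - 4) ≤ 0) :
    Projectivization.mk ℝ (P3 s (σ * Real.sqrt (s * (2 * s ^ 2 + l * s - 4) / (l - 2 * s))) 1)
      (P3_ne_zero_z one_ne_zero) ∈ Bset l := by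
  have hv2 : (σ * Real.sqrt (s * (2 * s ^ 2 + l * s - 4) / (l - 2 * s))) ^ 2
      = s * (2 * s ^ 2 + l * s - 4) / (l - 2 * s) := by
    rw [mul_pow, hσ, one_mul, Real.sq_sqrt hq]
  have hE : Eu l s (σ * Real.sqrt (s * (2 * s ^ 2 + l * s - 4) / (l - 2 * s))) 1 = 0 := by
    unfold Eu
    rw [hv2]
    linear_combination (-1:ℝ) * div_mul_cancel₀ (s * (2 * s ^ 2 + l * s - 4)) hd
  apply mk_P3_mem_Bset _ hE
  constructor
  · nlinarith
  · nlinarith [mul_nonneg hl.le (neg_nonneg.2 hsg)]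

/-- membership of the branch near infinity (v = 1 chart) in `Bset` -/
lemma memB2 {l : ℝ} (hl : 0 < l) (σ : ℝ) (hσ : σ ^ 2 = 1) (s : ℝ)
    (hms : s * (2 * s ^ 2 + l * s - 4) ≠ 0)
    (hd : 0 ≤ (l - 2 * s) / (s * (2 * s ^ 2 + l * s - 4))) (hls : 0 ≤ s)
    (hsg : (2 * s - l) * (2 * s ^ 2 + l * s - 4) ≤ 0) :
    Projectivization.mk ℝ
      (P3 (σ * Real.sqrt ((l - 2 * s) / (s * (2 * s ^ 2 + l * s - 4))) * s) 1
        (σ * Real.sqrt ((l - 2 * s) / (s * (2 * s ^ 2 + l * s - 4)))))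
      (P3_ne_zero_v one_ne_zero) ∈ Bset l := by
  set c := σ * Real.sqrt ((l - 2 * s) / (s * (2 * s ^ 2 + l * s - 4))) with hc
  have hc2 : c ^ 2 = (l - 2 * s) / (s * (2 * s ^ 2 + l * s - 4)) := by
    rw [hc, mul_pow, hσ, one_mul, Real.sq_sqrt hd]
  have hE : Eu l (c * s) 1 c = 0 := by
    have hid : Eu l (c * s) 1 c = c * ((2 * s - l) + c ^ 2 * (s * (2 * s ^ 2 + l * s - 4))) := by
      unfold Eu; ring
    rw [hid, hc2, div_mul_cancel₀ _ hms]
    ring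
  apply mk_P3_mem_Bset _ hE
  constructor
  · have h1 : l * (c * s) * c = c ^ 2 * (l * s) := by ring
    rw [h1]
    exact mul_nonneg (sq_nonneg c) (mul_nonneg hl.le hls)
  · have h2 : l * (2 * (c * s) * c - l * c ^ 2) * (2 * (c * s) ^ 2 + l * (c * s) * c - 4 * c ^ 2)
        = (c ^ 2) ^ 2 * (l * ((2 * s - l) * (2 * s ^ 2 + l * s - 4))) := by ring
    rw [h2]
    exact mul_nonpos_iff.2 (Or.inl ⟨sq_nonneg _,
      mul_nonpos_iff.2 (Or.inl ⟨hl.le, hsg⟩)⟩)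

/-- identification of the two charts at an interior point -/
lemma midlink {l : ℝ} (σ : ℝ) (hσ : σ ^ 2 = 1) (s : ℝ)
    (hms : s * (2 * s ^ 2 + l * s - 4) ≠ 0)
    (hd : 0 < (l - 2 * s) / (s * (2 * s ^ 2 + l * s - 4))) :
    Projectivization.mk ℝ
      (P3 (σ * Real.sqrt ((l - 2 * s) / (s * (2 * s ^ 2 + l * s - 4))) * s) 1
        (σ * Real.sqrt ((l - 2 * s) / (s * (2 * s ^ 2 + l * s - 4)))))
      (P3_ne_zero_v one_ne_zero)
    = Projectivization.mk ℝ
      (P3 s (σ * Real.sqrt (s * (2 * s ^ 2 + l * s - 4) / (l - 2 * s))) 1)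
      (P3_ne_zero_z one_ne_zero) := by
  have hσ0 : σ ≠ 0 := by intro h; rw [h] at hσ; norm_num at hσ
  set c := σ * Real.sqrt ((l - 2 * s) / (s * (2 * s ^ 2 + l * s - 4))) with hc
  have hcne : c ≠ 0 := mul_ne_zero hσ0 (Real.sqrt_ne_zero'.2 hd)
  have hdenne : l - 2 * s ≠ 0 := by
    intro h
    rw [h, zero_div] at hd
    exact lt_irrefl 0 hd
  have hdq : (l - 2 * s) / (s * (2 * s ^ 2 + l * s - 4))
      * (s * (2 * s ^ 2 + l * s - 4) / (l - 2 * s)) = 1 := by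
    rw [div_mul_div_comm, mul_comm (l - 2 * s), div_self (mul_ne_zero hms hdenne)]
  have hmid : c * (σ * Real.sqrt (s * (2 * s ^ 2 + l * s - 4) / (l - 2 * s))) = 1 := by
    rw [hc]
    rw [show σ * Real.sqrt ((l - 2 * s) / (s * (2 * s ^ 2 + l * s - 4)))
        * (σ * Real.sqrt (s * (2 * s ^ 2 + l * s - 4) / (l - 2 * s)))
      = σ ^ 2 * (Real.sqrt ((l - 2 * s) / (s * (2 * s ^ 2 + l * s - 4)))
        * Real.sqrt (s * (2 * s ^ 2 + l * s - 4) / (l - 2 * s))) from by ring]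
    rw [hσ, ← Real.sqrt_mul hd.le, hdq, Real.sqrt_one]
    ring
  have hvec : P3 (c * s) 1 c
      = c • P3 s (σ * Real.sqrt (s * (2 * s ^ 2 + l * s - 4) / (l - 2 * s))) 1 := by
    rw [P3_smul, hmid, mul_one]
  have h2 : c • P3 s (σ * Real.sqrt (s * (2 * s ^ 2 + l * s - 4) / (l - 2 * s))) 1 ≠ 0 := by
    rw [← hvec]; exact P3_ne_zero_v one_ne_zero
  calc Projectivization.mk ℝ (P3 (c * s) 1 c) (P3_ne_zero_v one_ne_zero)
      = Projectivization.mk ℝ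
        (c • P3 s (σ * Real.sqrt (s * (2 * s ^ 2 + l * s - 4) / (l - 2 * s))) 1) h2 :=
        mk_congr hvec _ _
    _ = _ := mk_smul_eq _ _ hcne _

end EL3
noncomputable section EL4
open Projectivization

set_option maxHeartbeats 1000000 in
lemma isPathConnected_Bset_pos {l : ℝ} (hl : 0 < l) (hl2 : l ≠ 2) :
    IsPathConnected (Bset l) := by
  obtain ⟨a, hap, ha2, hab⟩ := exists_ab hl
  obtain ⟨b, hbdef⟩ : ∃ b : ℝ, b = a - l / 2 := ⟨_, rfl⟩
  have hbp : 0 < b := by rw [hbdef]; linarith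
  have hqf : ∀ s : ℝ, 2 * s ^ 2 + l * s - 4 = 2 * (s + a) * (s - b) := by
    intro s; rw [hbdef]; linear_combination ha2
  have hbl : b ≠ l / 2 := by
    intro h
    have hal : a = l := by rw [hbdef] at h; linarith
    have h4 : l ^ 2 = 4 := by rw [hal] at ha2; nlinarith
    have : l = 2 := by nlinarith
    exact hl2 this
  suffices hj : ∀ p ∈ Bset l, JoinedIn (Bset l) p Pinf by
    exact ⟨Pinf, Pinf_mem_Bset l, fun {p} hp => (hj p hp).symm⟩
  intro p hp
  by_cases hz : p.rep 2 = 0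
  · rw [Bset_z0_eq_Pinf hp hz]
    exact JoinedIn.refl (Pinf_mem_Bset l)
  have hpn := point_normalize p hz
  rw [hpn] at hp
  generalize hu₀def : (p.rep 0 - p.rep 1) / p.rep 2 = u₀ at hp hpn
  generalize hv₀def : (p.rep 0 + p.rep 1) / p.rep 2 = v₀ at hp hpn
  have hE₀ : Eu l u₀ v₀ 1 = 0 := by
    have := hp.1
    rw [mk_mem_Epts_iff, Vr_P3] at this
    linarith
  have hcB : cBu l u₀ 1 := by
    have := hp.2
    rw [mk_mem_SBs_iff, cB_P3_iff] at this
    exact this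
  have hu₀nn : 0 ≤ u₀ := by nlinarith [hcB.1]
  have hu₀pos : 0 < u₀ := by
    rcases eq_or_lt_of_le hu₀nn with h | h
    · exfalso
      have h2 := hcB.2
      rw [← h] at h2
      nlinarith [h2]
    · exact h
  have hu₀ne : u₀ ≠ l / 2 := by
    intro h
    rw [h] at hE₀
    unfold Eu at hE₀
    have h4 : l ^ 2 = 4 := by nlinarith [hE₀]
    have : l = 2 := by nlinarith
    exact hl2 this
  have hsign : (2 * u₀ - l) * (2 * u₀ ^ 2 + l * u₀ - 4) ≤ 0 := by
    by_contra hcon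
    push_neg at hcon
    nlinarith [hcB.2, mul_pos hl hcon]
  have hmrel : u₀ * (2 * u₀ ^ 2 + l * u₀ - 4) = v₀ ^ 2 * (l - 2 * u₀) := by
    unfold Eu at hE₀; linear_combination hE₀
  obtain ⟨um, humdef⟩ : ∃ um : ℝ, um = (l / 2 + b) / 2 := ⟨_, rfl⟩
  -- the sign of the branch through p
  set σ := if 0 ≤ v₀ then (1:ℝ) else -1 with hσdef
  have hσ : σ ^ 2 = 1 := by rw [hσdef]; split_ifs <;> norm_num
  have hd₀ : l - 2 * u₀ ≠ 0 := fun h => hu₀ne (by linarith)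
  have hq₀ : u₀ * (2 * u₀ ^ 2 + l * u₀ - 4) / (l - 2 * u₀) = v₀ ^ 2 := by
    rw [hmrel]
    exact mul_div_cancel_right₀ _ hd₀
  have hstart : σ * Real.sqrt (u₀ * (2 * u₀ ^ 2 + l * u₀ - 4) / (l - 2 * u₀)) = v₀ := by
    rw [hq₀, Real.sqrt_sq_eq_abs, hσdef]
    split_ifs with h
    · rw [abs_of_nonneg h]; ring
    · rw [abs_of_neg (lt_of_not_ge h)]; ring
  have hstart_eq : Projectivization.mk ℝ
      (P3 u₀ (σ * Real.sqrt (u₀ * (2 * u₀ ^ 2 + l * u₀ - 4) / (l - 2 * u₀))) 1)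
      (P3_ne_zero_z one_ne_zero) = p := by
    rw [hpn]
    exact mk_congr (by rw [hstart]) _ _
  rcases lt_or_gt_of_ne hbl with hcase | hcase
  · -- b < l/2 : the branch is  b ≤ u₀ < l/2
    have hu₀lt : u₀ < l / 2 := by
      rcases lt_or_gt_of_ne hu₀ne with h | h
      · exact h
      · exfalso
        have h2 : 2 * u₀ ^ 2 + l * u₀ - 4 ≤ 0 := by
          by_contra hcon
          push_neg at hcon
          have h3 := mul_pos (show (0:ℝ) < 2 * u₀ - l by linarith) hcon
          linarith [hsign]
        rw [hqf] at h2
        have h4 : 0 < 2 * (u₀ + a) * (u₀ - b) :=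
          mul_pos (by linarith) (by linarith)
        linarith
    have hu₀ge : b ≤ u₀ := by
      have h2 : 0 ≤ 2 * u₀ ^ 2 + l * u₀ - 4 := by
        by_contra hcon
        push_neg at hcon
        have h3 := mul_pos (show (0:ℝ) < l - 2 * u₀ by linarith)
          (show (0:ℝ) < -(2 * u₀ ^ 2 + l * u₀ - 4) by linarith)
        nlinarith [hsign, h3]
      rw [hqf] at h2
      by_contra hcon
      push_neg at hcon
      have h4 : 2 * (u₀ + a) * (u₀ - b) < 0 :=
        mul_neg_of_pos_of_neg (by linarith) (by linarith)
      linarith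
    have humgt : b < um := by rw [humdef]; linarith
    have humlt : um < l / 2 := by rw [humdef]; linarith
    -- facts on uIcc u₀ um
    have hsub1 : ∀ s ∈ Set.uIcc u₀ um, b ≤ s ∧ s < l / 2 := by
      intro s hs
      rcases Set.mem_uIcc.1 hs with ⟨h1, h2⟩ | ⟨h1, h2⟩
      · exact ⟨by linarith, by linarith⟩
      · exact ⟨by linarith, by linarith⟩
    have hfacts1 : ∀ s, b ≤ s → s < l / 2 →
        l - 2 * s ≠ 0 ∧ 0 ≤ s * (2 * s ^ 2 + l * s - 4) / (l - 2 * s) ∧ 0 ≤ s ∧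
          (2 * s - l) * (2 * s ^ 2 + l * s - 4) ≤ 0 := by
      intro s h1 h2
      have hsp : 0 < s := lt_of_lt_of_le hbp h1
      have hden : 0 < l - 2 * s := by linarith
      have hqn : 0 ≤ 2 * s ^ 2 + l * s - 4 := by
        rw [hqf]
        exact mul_nonneg (by linarith) (by linarith)
      refine ⟨ne_of_gt hden, ?_, hsp.le, ?_⟩
      · exact div_nonneg (mul_nonneg hsp.le hqn) hden.le
      · exact mul_nonpos_iff.2 (Or.inr ⟨by linarith, hqn⟩)
    have hmem1 : ∀ s ∈ Set.uIcc u₀ um,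
        Projectivization.mk ℝ
          (P3 s (σ * Real.sqrt (s * (2 * s ^ 2 + l * s - 4) / (l - 2 * s))) 1)
          (P3_ne_zero_z one_ne_zero) ∈ Bset l := by
      intro s hs
      obtain ⟨h1, h2⟩ := hsub1 s hs
      obtain ⟨f1, f2, f3, f4⟩ := hfacts1 s h1 h2
      exact memB1 hl σ hσ s f1 f2 f3 f4
    have hcont1 : ContinuousOn (fun s => s * (2 * s ^ 2 + l * s - 4) / (l - 2 * s))
        (Set.uIcc u₀ um) := by
      apply ContinuousOn.div
      · fun_prop
      · fun_prop
      · exact fun s hs => (hfacts1 s (hsub1 s hs).1 (hsub1 s hs).2).1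
    have hpath1 := joined_family (fun s => s * (2 * s ^ 2 + l * s - 4) / (l - 2 * s))
      u₀ um hcont1 σ (Bset l) hmem1
    rw [hstart_eq] at hpath1
    -- path 2 : from um to l/2 in the v=1 chart
    have hsub2 : ∀ s ∈ Set.uIcc um (l / 2), um ≤ s ∧ s ≤ l / 2 := by
      intro s hs
      rcases Set.mem_uIcc.1 hs with ⟨h1, h2⟩ | ⟨h1, h2⟩
      · exact ⟨h1, h2⟩
      · exact ⟨by linarith, by linarith⟩
    have hfacts2 : ∀ s, um ≤ s → s ≤ l / 2 →
        s * (2 * s ^ 2 + l * s - 4) ≠ 0 ∧ 0 ≤ (l - 2 * s) / (s * (2 * s ^ 2 + l * s - 4)) ∧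
          0 ≤ s ∧ (2 * s - l) * (2 * s ^ 2 + l * s - 4) ≤ 0 := by
      intro s h1 h2
      have hsp : 0 < s := by linarith
      have hqn : 0 < 2 * s ^ 2 + l * s - 4 := by
        rw [hqf]
        have ha' : 0 < s + a := by linarith
        have hb' : 0 < s - b := by linarith
        positivity
      have hms : 0 < s * (2 * s ^ 2 + l * s - 4) := mul_pos hsp hqn
      refine ⟨ne_of_gt hms, ?_, hsp.le, ?_⟩
      · apply div_nonneg _ hms.le
        linarith
      · exact mul_nonpos_iff.2 (Or.inr ⟨by linarith, hqn.le⟩)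
    have hmem2 : ∀ s ∈ Set.uIcc um (l / 2),
        Projectivization.mk ℝ
          (P3 (σ * Real.sqrt ((l - 2 * s) / (s * (2 * s ^ 2 + l * s - 4))) * s) 1
            (σ * Real.sqrt ((l - 2 * s) / (s * (2 * s ^ 2 + l * s - 4)))))
          (P3_ne_zero_v one_ne_zero) ∈ Bset l := by
      intro s hs
      obtain ⟨h1, h2⟩ := hsub2 s hs
      obtain ⟨f1, f2, f3, f4⟩ := hfacts2 s h1 h2
      exact memB2 hl σ hσ s f1 f2 f3 f4
    have hcont2 : ContinuousOn (fun s => (l - 2 * s) / (s * (2 * s ^ 2 + l * s - 4)))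
        (Set.uIcc um (l / 2)) := by
      apply ContinuousOn.div
      · fun_prop
      · fun_prop
      · exact fun s hs => (hfacts2 s (hsub2 s hs).1 (hsub2 s hs).2).1
    have hpath2 := joined_family_inf (fun s => (l - 2 * s) / (s * (2 * s ^ 2 + l * s - 4)))
      um (l / 2) hcont2 σ (Bset l) hmem2
    -- identify endpoints
    have hmidpos : 0 < (l - 2 * um) / (um * (2 * um ^ 2 + l * um - 4)) := by
      obtain ⟨f1, f2, f3, f4⟩ := hfacts2 um le_rfl humlt.le
      rcases f2.lt_or_eq with h | h
      · exact h
      · exfalso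
        have hden : 0 < l - 2 * um := by linarith
        have : (l - 2 * um) = 0 := by
          by_contra hne
          have := div_ne_zero hne f1
          exact this h.symm
        linarith
    have hmid := midlink σ hσ um (hfacts2 um le_rfl humlt.le).1 hmidpos
    rw [hmid] at hpath2
    -- the far end is Pinf
    have hdl2 : (l - 2 * (l / 2)) / ((l / 2) * (2 * (l / 2) ^ 2 + l * (l / 2) - 4)) = 0 := by
      rw [show l - 2 * (l / 2) = 0 from by ring, zero_div]
    have hend : Projectivization.mk ℝ
        (P3 (σ * Real.sqrt ((l - 2 * (l / 2)) / ((l / 2) * (2 * (l / 2) ^ 2 + l * (l / 2) - 4)))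
          * (l / 2)) 1
          (σ * Real.sqrt ((l - 2 * (l / 2)) / ((l / 2) * (2 * (l / 2) ^ 2 + l * (l / 2) - 4)))))
        (P3_ne_zero_v one_ne_zero) = Pinf := by
      apply mk_congr
      rw [hdl2, Real.sqrt_zero, mul_zero, zero_mul]
    rw [hend] at hpath2
    exact hpath1.trans hpath2
  · -- l/2 < b : the branch is  l/2 < u₀ ≤ b
    have hu₀gt : l / 2 < u₀ := by
      rcases lt_or_gt_of_ne hu₀ne with h | h
      · exfalso
        have h2 : 0 ≤ 2 * u₀ ^ 2 + l * u₀ - 4 := by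
          by_contra hcon
          push_neg at hcon
          have h3 := mul_pos (show (0:ℝ) < l - 2 * u₀ by linarith)
            (show (0:ℝ) < -(2 * u₀ ^ 2 + l * u₀ - 4) by linarith)
          nlinarith [hsign, h3]
        rw [hqf] at h2
        have h4 : 2 * (u₀ + a) * (u₀ - b) < 0 :=
          mul_neg_of_pos_of_neg (by linarith) (by linarith)
        linarith
      · exact h
    have hu₀le : u₀ ≤ b := by
      have h2 : 2 * u₀ ^ 2 + l * u₀ - 4 ≤ 0 := by
        by_contra hcon
        push_neg at hcon
        have h3 := mul_pos (show (0:ℝ) < 2 * u₀ - l by linarith) hcon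
        linarith [hsign]
      rw [hqf] at h2
      by_contra hcon
      push_neg at hcon
      have h4 : 0 < 2 * (u₀ + a) * (u₀ - b) :=
        mul_pos (by linarith) (by linarith)
      linarith
    have humgt : l / 2 < um := by rw [humdef]; linarith
    have humlt : um < b := by rw [humdef]; linarith
    have hsub1 : ∀ s ∈ Set.uIcc u₀ um, l / 2 < s ∧ s ≤ b := by
      intro s hs
      rcases Set.mem_uIcc.1 hs with ⟨h1, h2⟩ | ⟨h1, h2⟩
      · exact ⟨by linarith, by linarith⟩
      · exact ⟨by linarith, by linarith⟩
    have hfacts1 : ∀ s, l / 2 < s → s ≤ b →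
        l - 2 * s ≠ 0 ∧ 0 ≤ s * (2 * s ^ 2 + l * s - 4) / (l - 2 * s) ∧ 0 ≤ s ∧
          (2 * s - l) * (2 * s ^ 2 + l * s - 4) ≤ 0 := by
      intro s h1 h2
      have hsp : 0 < s := by linarith
      have hden : l - 2 * s < 0 := by linarith
      have hqn : 2 * s ^ 2 + l * s - 4 ≤ 0 := by
        rw [hqf]
        exact mul_nonpos_iff.2 (Or.inl ⟨by linarith, by linarith⟩)
      refine ⟨ne_of_lt hden, ?_, hsp.le, ?_⟩
      · rw [div_nonneg_iff]
        right
        exact ⟨mul_nonpos_iff.2 (Or.inl ⟨hsp.le, hqn⟩), hden.le⟩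
      · exact mul_nonpos_iff.2 (Or.inl ⟨by linarith, hqn⟩)
    have hmem1 : ∀ s ∈ Set.uIcc u₀ um,
        Projectivization.mk ℝ
          (P3 s (σ * Real.sqrt (s * (2 * s ^ 2 + l * s - 4) / (l - 2 * s))) 1)
          (P3_ne_zero_z one_ne_zero) ∈ Bset l := by
      intro s hs
      obtain ⟨h1, h2⟩ := hsub1 s hs
      obtain ⟨f1, f2, f3, f4⟩ := hfacts1 s h1 h2
      exact memB1 hl σ hσ s f1 f2 f3 f4
    have hcont1 : ContinuousOn (fun s => s * (2 * s ^ 2 + l * s - 4) / (l - 2 * s))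
        (Set.uIcc u₀ um) := by
      apply ContinuousOn.div
      · fun_prop
      · fun_prop
      · exact fun s hs => (hfacts1 s (hsub1 s hs).1 (hsub1 s hs).2).1
    have hpath1 := joined_family (fun s => s * (2 * s ^ 2 + l * s - 4) / (l - 2 * s))
      u₀ um hcont1 σ (Bset l) hmem1
    rw [hstart_eq] at hpath1
    have hsub2 : ∀ s ∈ Set.uIcc um (l / 2), l / 2 ≤ s ∧ s ≤ um := by
      intro s hs
      rcases Set.mem_uIcc.1 hs with ⟨h1, h2⟩ | ⟨h1, h2⟩
      · exact ⟨by linarith, by linarith⟩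
      · exact ⟨h1, h2⟩
    have hfacts2 : ∀ s, l / 2 ≤ s → s ≤ um →
        s * (2 * s ^ 2 + l * s - 4) ≠ 0 ∧ 0 ≤ (l - 2 * s) / (s * (2 * s ^ 2 + l * s - 4)) ∧
          0 ≤ s ∧ (2 * s - l) * (2 * s ^ 2 + l * s - 4) ≤ 0 := by
      intro s h1 h2
      have hsp : 0 < s := by linarith
      have hqn : 2 * s ^ 2 + l * s - 4 < 0 := by
        rw [hqf]
        exact mul_neg_of_pos_of_neg (by linarith) (by linarith)
      have hms : s * (2 * s ^ 2 + l * s - 4) < 0 := mul_neg_of_pos_of_neg hsp hqn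
      refine ⟨ne_of_lt hms, ?_, hsp.le, ?_⟩
      · rw [div_nonneg_iff]
        right
        exact ⟨by linarith, hms.le⟩
      · exact mul_nonpos_iff.2 (Or.inl ⟨by linarith, hqn.le⟩)
    have hmem2 : ∀ s ∈ Set.uIcc um (l / 2),
        Projectivization.mk ℝ
          (P3 (σ * Real.sqrt ((l - 2 * s) / (s * (2 * s ^ 2 + l * s - 4))) * s) 1
            (σ * Real.sqrt ((l - 2 * s) / (s * (2 * s ^ 2 + l * s - 4)))))
          (P3_ne_zero_v one_ne_zero) ∈ Bset l := by
      intro s hs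
      obtain ⟨h1, h2⟩ := hsub2 s hs
      obtain ⟨f1, f2, f3, f4⟩ := hfacts2 s h1 h2
      exact memB2 hl σ hσ s f1 f2 f3 f4
    have hcont2 : ContinuousOn (fun s => (l - 2 * s) / (s * (2 * s ^ 2 + l * s - 4)))
        (Set.uIcc um (l / 2)) := by
      apply ContinuousOn.div
      · fun_prop
      · fun_prop
      · exact fun s hs => (hfacts2 s (hsub2 s hs).1 (hsub2 s hs).2).1
    have hpath2 := joined_family_inf (fun s => (l - 2 * s) / (s * (2 * s ^ 2 + l * s - 4)))
      um (l / 2) hcont2 σ (Bset l) hmem2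
    have hmidpos : 0 < (l - 2 * um) / (um * (2 * um ^ 2 + l * um - 4)) := by
      obtain ⟨f1, f2, f3, f4⟩ := hfacts2 um humgt.le le_rfl
      rcases f2.lt_or_eq with h | h
      · exact h
      · exfalso
        have hden : l - 2 * um < 0 := by linarith
        have : (l - 2 * um) = 0 := by
          by_contra hne
          have := div_ne_zero hne f1
          exact this h.symm
        linarith
    have hmid := midlink σ hσ um (hfacts2 um humgt.le le_rfl).1 hmidpos
    rw [hmid] at hpath2
    have hdl2 : (l - 2 * (l / 2)) / ((l / 2) * (2 * (l / 2) ^ 2 + l * (l / 2) - 4)) = 0 := by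
      rw [show l - 2 * (l / 2) = 0 from by ring, zero_div]
    have hend : Projectivization.mk ℝ
        (P3 (σ * Real.sqrt ((l - 2 * (l / 2)) / ((l / 2) * (2 * (l / 2) ^ 2 + l * (l / 2) - 4)))
          * (l / 2)) 1
          (σ * Real.sqrt ((l - 2 * (l / 2)) / ((l / 2) * (2 * (l / 2) ^ 2 + l * (l / 2) - 4)))))
        (P3_ne_zero_v one_ne_zero) = Pinf := by
      apply mk_congr
      rw [hdl2, Real.sqrt_zero, mul_zero, zero_mul]
    rw [hend] at hpath2
    exact hpath1.trans hpath2

end EL4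
noncomputable section EL5
open Projectivization

lemma isClosed_Epts (l : ℝ) : IsClosed (Epts l) := by
  have h := isClosed_repSet (fun x y z => Vr l x y z = 0)
    (fun c hc x y z => Vr_smul_zero l hc x y z)
    (by
      apply isClosed_eq _ continuous_const
      show Continuous fun w : Fin 3 → ℝ => Vr l (w 0) (w 1) (w 2)
      unfold Vr
      fun_prop)
  exact h

lemma isClosed_SAs (l : ℝ) : IsClosed (SAs l) := by
  have h := isClosed_repSet (fun x y z => cA l x y z)
    (fun c hc x y z => cA_smul l hc x y z)
    (by
      have : {w : Fin 3 → ℝ | cA l (w 0) (w 1) (w 2)}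
          = {w : Fin 3 → ℝ | l * (w 0 - w 1) * w 2 ≤ 0}
            ∩ {w : Fin 3 → ℝ | (w 0 + w 1) ^ 2 ≤ MM l * (w 2) ^ 2} := rfl
      rw [this]
      exact (isClosed_le (by fun_prop) continuous_const).inter
        (isClosed_le (by fun_prop) (by fun_prop)))
  exact h

lemma isClosed_SBs (l : ℝ) : IsClosed (SBs l) := by
  have h := isClosed_repSet (fun x y z => cB l x y z)
    (fun c hc x y z => cB_smul l hc x y z)
    (by
      have : {w : Fin 3 → ℝ | cB l (w 0) (w 1) (w 2)}
          = {w : Fin 3 → ℝ | 0 ≤ l * (w 0 - w 1) * w 2}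
            ∩ {w : Fin 3 → ℝ | l * (2 * (w 0 - w 1) * w 2 - l * (w 2) ^ 2) *
                (2 * (w 0 - w 1) ^ 2 + l * (w 0 - w 1) * w 2 - 4 * (w 2) ^ 2) ≤ 0} := rfl
      rw [this]
      exact (isClosed_le continuous_const (by fun_prop)).inter
        (isClosed_le (by fun_prop) continuous_const))
  exact h

lemma isClosed_Aset (l : ℝ) : IsClosed (Aset l) := (isClosed_Epts l).inter (isClosed_SAs l)
lemma isClosed_Bset (l : ℝ) : IsClosed (Bset l) := (isClosed_Epts l).inter (isClosed_SBs l)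

lemma Epts_eq_union (l : ℝ) (hl : l ≠ 0) : Epts l = Aset l ∪ Bset l := by
  ext p
  constructor
  · intro hp
    rcases coverR hl (mem_Epts_Eu hp) with h | h
    · exact Or.inl ⟨hp, h⟩
    · exact Or.inr ⟨hp, h⟩
  · rintro (⟨h, _⟩ | ⟨h, _⟩) <;> exact h

lemma AB_disjoint (l : ℝ) (hl : l ≠ 0) : Aset l ∩ Bset l = ∅ := by
  ext p
  simp only [Set.mem_inter_iff, Set.mem_empty_iff_false, iff_false, not_and]
  rintro ⟨hE, hA⟩ ⟨_, hB⟩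
  exact disjR hl (rep_uvz_ne p) (mem_Epts_Eu hE) hA hB

def Pzero : RP2 := Projectivization.mk ℝ (P3 0 0 1) (P3_ne_zero_z one_ne_zero)

lemma Pzero_mem_Aset (l : ℝ) : Pzero ∈ Aset l := by
  refine mk_P3_mem_Aset _ ?_ ?_
  · unfold Eu; ring
  · refine ⟨by norm_num, by norm_num [MM_nonneg l]⟩

/-! ### reflection invariance -/

lemma reflLin_ne (w : Fin 3 → ℝ) (hw : w ≠ 0) : reflLin w ≠ 0 :=
  fun h => hw (reflLin_injective (by rw [h, map_zero]))

lemma reflRho_mk (w : Fin 3 → ℝ) (hw : w ≠ 0) :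
    reflRho (Projectivization.mk ℝ w hw)
      = Projectivization.mk ℝ (reflLin w) (reflLin_ne w hw) :=
  Projectivization.map_mk reflLin reflLin_injective w hw

lemma Vr_refl (l x y z : ℝ) : Vr l (-y) (-x) z = Vr l x y z := by unfold Vr; ring

lemma cA_refl (l x y z : ℝ) : cA l (-y) (-x) z ↔ cA l x y z := by
  unfold cA
  constructor <;> rintro ⟨h1, h2⟩ <;> constructor <;> nlinarith

lemma cB_refl (l x y z : ℝ) : cB l (-y) (-x) z ↔ cB l x y z := by
  unfold cB
  constructor <;> rintro ⟨h1, h2⟩ <;> constructor <;> nlinarith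

lemma reflRho_eq (p : RP2) :
    reflRho p = Projectivization.mk ℝ (reflLin p.rep)
      (reflLin_ne p.rep (Projectivization.rep_nonzero p)) := by
  nth_rewrite 1 [← Projectivization.mk_rep p]
  exact reflRho_mk _ _

lemma reflLin_apply0 (w : Fin 3 → ℝ) : reflLin w 0 = -w 1 := rfl
lemma reflLin_apply1 (w : Fin 3 → ℝ) : reflLin w 1 = -w 0 := rfl
lemma reflLin_apply2 (w : Fin 3 → ℝ) : reflLin w 2 = w 2 := rfl

lemma reflRho_mem_Aset {l : ℝ} {p : RP2} (hp : p ∈ Aset l) : reflRho p ∈ Aset l := by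
  rw [reflRho_eq]
  constructor
  · show _ ∈ Epts l
    rw [mk_mem_Epts_iff, reflLin_apply0, reflLin_apply1, reflLin_apply2, Vr_refl]
    exact hp.1
  · show _ ∈ SAs l
    rw [mk_mem_SAs_iff, reflLin_apply0, reflLin_apply1, reflLin_apply2, cA_refl]
    exact hp.2

lemma reflRho_mem_Bset {l : ℝ} {p : RP2} (hp : p ∈ Bset l) : reflRho p ∈ Bset l := by
  rw [reflRho_eq]
  constructor
  · show _ ∈ Epts l
    rw [mk_mem_Epts_iff, reflLin_apply0, reflLin_apply1, reflLin_apply2, Vr_refl]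
    exact hp.1
  · show _ ∈ SBs l
    rw [mk_mem_SBs_iff, reflLin_apply0, reflLin_apply1, reflLin_apply2, cB_refl]
    exact hp.2

/-! ### the swap x ↔ y and λ ↔ -λ -/

def swLin : (Fin 3 → ℝ) →ₗ[ℝ] (Fin 3 → ℝ) where
  toFun v := ![v 1, v 0, v 2]
  map_add' a b := by funext i; fin_cases i <;> simp
  map_smul' c a := by funext i; fin_cases i <;> simp

lemma swLin_injective : Function.Injective swLin := by
  intro a b h
  have h0 := congrFun h 0
  have h1 := congrFun h 1
  have h2 := congrFun h 2
  simp [swLin] at h0 h1 h2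
  funext i
  fin_cases i <;> simp [h0, h1, h2]

lemma swLin_ne (w : Fin 3 → ℝ) (hw : w ≠ 0) : swLin w ≠ 0 :=
  fun h => hw (swLin_injective (by rw [h, map_zero]))

def swP : RP2 → RP2 := Projectivization.map swLin swLin_injective

lemma swP_mk (w : Fin 3 → ℝ) (hw : w ≠ 0) :
    swP (Projectivization.mk ℝ w hw) = Projectivization.mk ℝ (swLin w) (swLin_ne w hw) :=
  Projectivization.map_mk swLin swLin_injective w hw

lemma swP_cont : Continuous swP := by
  have hq : Topology.IsQuotientMap
      (fun (v : {v : Fin 3 → ℝ // v ≠ 0}) => Projectivization.mk ℝ v.val v.prop) :=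
    isQuotientMap_quotient_mk'
  rw [hq.continuous_iff]
  have heq : (swP ∘ fun (v : {v : Fin 3 → ℝ // v ≠ 0}) => Projectivization.mk ℝ v.val v.prop)
      = fun (v : {v : Fin 3 → ℝ // v ≠ 0}) =>
          Projectivization.mk ℝ (swLin v.val) (swLin_ne v.val v.prop) := by
    funext v
    exact swP_mk v.val v.prop
  rw [heq]
  apply continuous_mk_comp
  show Continuous fun (v : {v : Fin 3 → ℝ // v ≠ 0}) => (![v.val 1, v.val 0, v.val 2] : Fin 3 → ℝ)
  exact continuous_vec3 ((continuous_apply 1).comp continuous_subtype_val)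
    ((continuous_apply 0).comp continuous_subtype_val)
    ((continuous_apply 2).comp continuous_subtype_val)

lemma swLin_invol (w : Fin 3 → ℝ) : swLin (swLin w) = w := by
  funext i; fin_cases i <;> rfl

lemma swP_invol (p : RP2) : swP (swP p) = p := by
  calc swP (swP p) = swP (swP (Projectivization.mk ℝ p.rep (Projectivization.rep_nonzero p))) :=
        by rw [Projectivization.mk_rep]
    _ = Projectivization.mk ℝ (swLin (swLin p.rep))
        (swLin_ne _ (swLin_ne _ (Projectivization.rep_nonzero p))) := by rw [swP_mk, swP_mk]
    _ = Projectivization.mk ℝ p.rep (Projectivization.rep_nonzero p) :=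
        mk_congr (swLin_invol p.rep) _ _
    _ = p := Projectivization.mk_rep p

lemma Vr_sw (l x y z : ℝ) : Vr (-l) y x z = -Vr l x y z := by unfold Vr; ring

lemma cA_sw (l x y z : ℝ) : cA (-l) y x z ↔ cA l x y z := by
  unfold cA
  rw [MM_neg]
  constructor <;> rintro ⟨h1, h2⟩ <;> constructor <;> nlinarith

lemma cB_sw (l x y z : ℝ) : cB (-l) y x z ↔ cB l x y z := by
  unfold cB
  constructor <;> rintro ⟨h1, h2⟩ <;> constructor <;> nlinarith

lemma swLin_apply0 (w : Fin 3 → ℝ) : swLin w 0 = w 1 := rfl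
lemma swLin_apply1 (w : Fin 3 → ℝ) : swLin w 1 = w 0 := rfl
lemma swLin_apply2 (w : Fin 3 → ℝ) : swLin w 2 = w 2 := rfl

lemma swP_eq (p : RP2) :
    swP p = Projectivization.mk ℝ (swLin p.rep)
      (swLin_ne p.rep (Projectivization.rep_nonzero p)) := by
  nth_rewrite 1 [← Projectivization.mk_rep p]
  exact swP_mk _ _

lemma swP_mem_Aset {l : ℝ} {p : RP2} : swP p ∈ Aset (-l) ↔ p ∈ Aset l := by
  rw [swP_eq]
  constructor
  · rintro ⟨hE, hA⟩
    rw [mk_mem_Epts_iff, swLin_apply0, swLin_apply1, swLin_apply2, Vr_sw, neg_eq_zero] at hE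
    rw [mk_mem_SAs_iff, swLin_apply0, swLin_apply1, swLin_apply2, cA_sw] at hA
    exact ⟨hE, hA⟩
  · rintro ⟨hE, hA⟩
    constructor
    · show _ ∈ Epts (-l)
      rw [mk_mem_Epts_iff, swLin_apply0, swLin_apply1, swLin_apply2, Vr_sw, neg_eq_zero]
      exact hE
    · show _ ∈ SAs (-l)
      rw [mk_mem_SAs_iff, swLin_apply0, swLin_apply1, swLin_apply2, cA_sw]
      exact hA

lemma swP_mem_Bset {l : ℝ} {p : RP2} : swP p ∈ Bset (-l) ↔ p ∈ Bset l := by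
  rw [swP_eq]
  constructor
  · rintro ⟨hE, hB⟩
    rw [mk_mem_Epts_iff, swLin_apply0, swLin_apply1, swLin_apply2, Vr_sw, neg_eq_zero] at hE
    rw [mk_mem_SBs_iff, swLin_apply0, swLin_apply1, swLin_apply2, cB_sw] at hB
    exact ⟨hE, hB⟩
  · rintro ⟨hE, hB⟩
    constructor
    · show _ ∈ Epts (-l)
      rw [mk_mem_Epts_iff, swLin_apply0, swLin_apply1, swLin_apply2, Vr_sw, neg_eq_zero]
      exact hE
    · show _ ∈ SBs (-l)
      rw [mk_mem_SBs_iff, swLin_apply0, swLin_apply1, swLin_apply2, cB_sw]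
      exact hB

lemma Aset_neg_image (l : ℝ) : Aset l = swP '' Aset (-l) := by
  ext p
  constructor
  · intro hp
    exact ⟨swP p, swP_mem_Aset.2 hp, swP_invol p⟩
  · rintro ⟨q, hq, rfl⟩
    have h := swP_mem_Aset (l := -l) (p := q)
    rw [neg_neg] at h
    exact h.2 hq

lemma Bset_neg_image (l : ℝ) : Bset l = swP '' Bset (-l) := by
  ext p
  constructor
  · intro hp
    exact ⟨swP p, swP_mem_Bset.2 hp, swP_invol p⟩
  · rintro ⟨q, hq, rfl⟩
    have h := swP_mem_Bset (l := -l) (p := q)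
    rw [neg_neg] at h
    exact h.2 hq

lemma isPreconnected_Aset {l : ℝ} (hl0 : l ≠ 0) : IsPreconnected (Aset l) := by
  rcases hl0.lt_or_gt with h | h
  · have hpos : 0 < -l := by linarith
    have hpc := (isPathConnected_Aset_pos hpos).isConnected.isPreconnected
    have himg := hpc.image swP swP_cont.continuousOn
    rwa [← Aset_neg_image l] at himg
  · exact (isPathConnected_Aset_pos h).isConnected.isPreconnected

lemma isPreconnected_Bset {l : ℝ} (hl0 : l ≠ 0) (hl2 : l ≠ 2) (hlm2 : l ≠ -2) :
    IsPreconnected (Bset l) := by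
  rcases hl0.lt_or_gt with h | h
  · have hpos : 0 < -l := by linarith
    have hne2 : -l ≠ 2 := fun hc => hlm2 (by linarith)
    have hpc := (isPathConnected_Bset_pos hpos hne2).isConnected.isPreconnected
    have himg := hpc.image swP swP_cont.continuousOn
    rwa [← Bset_neg_image l] at himg
  · exact (isPathConnected_Bset_pos h hl2).isConnected.isPreconnected

/-! ### identification of connected components -/

lemma compIn_eq {E A B : Set RP2} (hE : E = A ∪ B) (hd : A ∩ B = ∅)
    (hA : IsClosed A) (hB : IsClosed B) (hApre : IsPreconnected A) {p : RP2} (hp : p ∈ A) :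
    connectedComponentIn E p = A := by
  have hpE : p ∈ E := by rw [hE]; exact Or.inl hp
  apply subset_antisymm
  · have hT := isPreconnected_connectedComponentIn (x := p) (F := E)
    have hTsub : connectedComponentIn E p ⊆ A ∪ B := by
      rw [← hE]; exact connectedComponentIn_subset E p
    have hdisj : connectedComponentIn E p ∩ (A ∩ B) = ∅ := by
      rw [hd, Set.inter_empty]
    rcases (isPreconnected_iff_subset_of_disjoint_closed.1 hT) A B hA hB hTsub hdisj with h | h
    · exact h
    · exfalso
      have hpB := h (mem_connectedComponentIn hpE)
      have hmem : p ∈ A ∩ B := ⟨hp, hpB⟩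
      rw [hd] at hmem
      exact hmem
  · exact hApre.subset_connectedComponentIn hp (by rw [hE]; exact Set.subset_union_left)

lemma Bset_not_chart (l : ℝ) : ¬ (Bset l ⊆ {p : RP2 | p.rep 2 ≠ 0}) :=
  fun h => (h (Pinf_mem_Bset l)) Pinf_rep2

end EL5

/-- For real λ ∉ {-2, 0, 2}, the real points of `E_λ` have exactly two connected
components, each invariant under the reflection `[x:y:z] ↦ [-y:-x:z]`, and exactly one
of the two components is contained in the affine chart `z ≠ 0`. -/
theorem E_lambda_two_components (l : ℝ) (hm2 : l ≠ -2) (h0 : l ≠ 0) (h2 : l ≠ 2) :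
    ∃ C₁ C₂ : Set (Projectivization ℝ (Fin 3 → ℝ)),
      C₁ ≠ C₂ ∧
      (∀ p ∈ Epts l, connectedComponentIn (Epts l) p = C₁ ∨
        connectedComponentIn (Epts l) p = C₂) ∧
      (∃ p ∈ Epts l, connectedComponentIn (Epts l) p = C₁) ∧
      (∃ p ∈ Epts l, connectedComponentIn (Epts l) p = C₂) ∧
      (∀ p ∈ Epts l, reflRho p ∈ connectedComponentIn (Epts l) p) ∧
      C₁ ⊆ {p : Projectivization ℝ (Fin 3 → ℝ) | p.rep 2 ≠ 0} ∧
      ¬ C₂ ⊆ {p : Projectivization ℝ (Fin 3 → ℝ) | p.rep 2 ≠ 0} := by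
  have hE := Epts_eq_union l h0
  have hd := AB_disjoint l h0
  have hd' : Bset l ∩ Aset l = ∅ := by rw [Set.inter_comm]; exact hd
  have hE' : Epts l = Bset l ∪ Aset l := by rw [hE, Set.union_comm]
  have hAc := isClosed_Aset l
  have hBc := isClosed_Bset l
  have hApre := isPreconnected_Aset h0
  have hBpre := isPreconnected_Bset h0 h2 hm2
  refine ⟨Aset l, Bset l, ?_, ?_, ?_, ?_, ?_, Aset_sub_chart l, Bset_not_chart l⟩
  · intro hABeq
    have hmem : Pzero ∈ Aset l ∩ Bset l := ⟨Pzero_mem_Aset l, hABeq ▸ Pzero_mem_Aset l⟩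
    rw [hd] at hmem
    exact hmem
  · intro p hp
    rw [hE] at hp
    rcases hp with h | h
    · exact Or.inl (compIn_eq hE hd hAc hBc hApre h)
    · exact Or.inr (compIn_eq hE' hd' hBc hAc hBpre h)
  · exact ⟨Pzero, (Pzero_mem_Aset l).1, compIn_eq hE hd hAc hBc hApre (Pzero_mem_Aset l)⟩
  · exact ⟨Pinf, (Pinf_mem_Bset l).1, compIn_eq hE' hd' hBc hAc hBpre (Pinf_mem_Bset l)⟩
  · intro p hp
    rw [hE] at hp
    rcases hp with h | h
    · rw [compIn_eq hE hd hAc hBc hApre h]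
      exact reflRho_mem_Aset h
    · rw [compIn_eq hE' hd' hBc hAc hBpre h]
      exact reflRho_mem_Bset h
end

section
/- The map T preserves the diagonal line {x = y} and acts there by the Möbius map x ↦ (1+x)/(1+2x): for every x ∈ ℝ at which T is defined at (x,x) and with 1+2x ≠ 0, one has T(x,x) = ((1+x)/(1+2x), (1+x)/(1+2x)). -/
/-- `T` preserves the diagonal line `x = y`, acting by `x ↦ (1+x)/(1+2x)`. -/
theorem T_on_diagonal (x : ℝ) (hdef : tDen x x ≠ 0) (h : 1 + 2 * x ≠ 0) :
    T (x, x) = ((1 + x) / (1 + 2 * x), (1 + x) / (1 + 2 * x)) := by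
  have hden : tDen x x = (1 + 2 * x) * (4 * x ^ 4) := by unfold tDen; ring
  have hx : x ≠ 0 := by
    intro h0
    apply hdef
    rw [hden, h0]; ring
  simp only [T, tA, tB, hden]
  field_simp
  ext <;> dsimp only <;> field_simp <;> ring
end

section
/- The Möbius map g(x) = (1+x)/(1+2x) has exactly the two fixed points x = 1/√2 and x = −1/√2 among real numbers with 1+2x ≠ 0; the fixed point 1/√2 is globally attracting in the following sense: if x₀ ∈ ℝ with x₀ ≠ −1/√2 and the orbit x_{n+1} = g(x_n) is defined for all n ≥ 0 (i.e. 1 + 2x_n ≠ 0 for all n), then x_n converges to 1/√2 as n → ∞. -/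
/-- The Möbius map `g(x) = (1+x)/(1+2x)` has exactly the fixed points `±1/√2`, and the
fixed point `1/√2` attracts every orbit that is defined for all time and does not start
at `-1/√2`. -/
theorem moebius_fixed_points_and_attraction :
    ({x : ℝ | 1 + 2 * x ≠ 0 ∧ (1 + x) / (1 + 2 * x) = x} =
      {1 / Real.sqrt 2, -(1 / Real.sqrt 2)}) ∧
    ∀ x : ℕ → ℝ, x 0 ≠ -(1 / Real.sqrt 2) → (∀ n, 1 + 2 * x n ≠ 0) →
      (∀ n, x (n + 1) = (1 + x n) / (1 + 2 * x n)) →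
      Filter.Tendsto x Filter.atTop (nhds (1 / Real.sqrt 2)) := by
  have hr0 : (0:ℝ) < Real.sqrt 2 := Real.sqrt_pos.mpr (by norm_num)
  have hr2 : Real.sqrt 2 ^ 2 = 2 := Real.sq_sqrt (by norm_num)
  have hr1 : (1:ℝ) < Real.sqrt 2 := by nlinarith
  set s : ℝ := 1 / Real.sqrt 2 with hs
  have hs0 : 0 < s := by positivity
  have hss : 2 * s ^ 2 = 1 := by
    rw [hs, div_pow, one_pow, hr2]; norm_num
  have h2s : 1 < 2 * s := by nlinarith
  have hden : (1:ℝ) + 2 * s ≠ 0 := by nlinarith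
  constructor
  · ext x
    simp only [Set.mem_setOf_eq, Set.mem_insert_iff, Set.mem_singleton_iff]
    constructor
    · rintro ⟨hne, heq⟩
      have h1 : 1 + x = x * (1 + 2 * x) := (div_eq_iff hne).mp heq
      have h : (x - s) * (x + s) = 0 := by nlinarith
      rcases mul_eq_zero.mp h with h | h
      · left; linarith
      · right; linarith
    · rintro (rfl | rfl)
      · refine ⟨hden, ?_⟩
        rw [div_eq_iff hden]; nlinarith
      · have hne : 1 + 2 * (-s) ≠ 0 := by intro h; nlinarith
        refine ⟨hne, ?_⟩
        rw [div_eq_iff hne]; nlinarith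
  · intro x h0 hd hrec
    clear hs
    clear_value s
    -- the orbit never hits -s
    have hx : ∀ n, x n + s ≠ 0 := by
      intro n
      induction n with
      | zero => intro h; exact h0 (by linarith)
      | succ n ih =>
        intro h
        have h1 : 1 + x n = (x (n+1)) * (1 + 2 * x n) := (div_eq_iff (hd n)).mp (hrec n).symm
        have hxn1 : x (n+1) = -s := by linarith
        rw [hxn1] at h1
        have key : (1 + 2 * s) * (x n + s) = 0 := by linear_combination h1 + hss
        exact ih ((mul_eq_zero.mp key).resolve_left hden)
    set k : ℝ := (1 - 2 * s) / (1 + 2 * s) with hk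
    set y : ℕ → ℝ := fun n => (x n - s) / (x n + s) with hy
    have hstep : ∀ n, y (n+1) = k * y n := by
      intro n
      have h1 := hx n
      have h2 := hd n
      show (x (n+1) - s) / (x (n+1) + s) = k * ((x n - s) / (x n + s))
      have e1 : x (n+1) - s = (1 - 2*s) * (x n - s) / (1 + 2 * x n) := by
        rw [hrec n, div_sub' h2]
        congr 1
        linear_combination -hss
      have e2 : x (n+1) + s = (1 + 2*s) * (x n + s) / (1 + 2 * x n) := by
        rw [hrec n, div_add' _ _ _ h2]
        congr 1
        linear_combination -hss
      rw [e1, e2, hk]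
      rw [div_div_div_eq]
      field_simp [h1, h2]
    have hyn : ∀ n, y n = k ^ n * y 0 := by
      intro n
      induction n with
      | zero => simp
      | succ n ih => rw [hstep n, ih, pow_succ]; ring
    have hkabs : |k| < 1 := by
      rw [hk, abs_div, abs_of_pos (by linarith : (0:ℝ) < 1 + 2*s),
        abs_of_neg (by linarith : 1 - 2*s < 0)]
      rw [div_lt_one (by linarith)]
      linarith
    have hy0 : Filter.Tendsto y Filter.atTop (nhds 0) := by
      have := (tendsto_pow_atTop_nhds_zero_of_abs_lt_one hkabs).mul_const (y 0)
      rw [zero_mul] at this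
      exact this.congr fun n => (hyn n).symm
    have h1y : ∀ n, 1 - y n ≠ 0 := by
      intro n
      have : 1 - y n = 2 * s / (x n + s) := by
        rw [hy]
        field_simp [hx n]
        ring
      rw [this]
      exact div_ne_zero (by positivity) (hx n)
    have hx_eq : ∀ n, x n = s * (1 + y n) / (1 - y n) := by
      intro n
      rw [eq_div_iff (h1y n), hy]
      field_simp [hx n]
      ring
    have : Filter.Tendsto (fun n => s * (1 + y n) / (1 - y n)) Filter.atTop
        (nhds (s * (1 + 0) / (1 - 0))) := by
      exact (tendsto_const_nhds.mul (tendsto_const_nhds.add hy0)).div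
        (tendsto_const_nhds.sub hy0) (by norm_num)
    simp only [add_zero, sub_zero, mul_one, div_one] at this
    exact this.congr fun n => (hx_eq n).symm
end

section
/- The level sets Ψ = ±2 each decompose as the union of a line and a circle: one has the polynomial identities (x−y)(x²+y²−1) − 2xy = (x−y−1)(x²+y²+x−y) and (x−y)(x²+y²−1) + 2xy = (x−y+1)(x²+y²−x+y) for all real x, y. Consequently, for (x,y) ∈ ℝ² with xy ≠ 0, Ψ(x,y) = 2 if and only if y = x − 1 or (x + 1/2)² + (y − 1/2)² = 1/2, and Ψ(x,y) = −2 if and only if y = x + 1 or (x − 1/2)² + (y + 1/2)² = 1/2. -/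
/-- The level sets `Ψ = ±2` each decompose as the union of a line and a circle. -/
theorem psi_level_sets_pm_two :
    (∀ x y : ℝ,
      (x - y) * (x ^ 2 + y ^ 2 - 1) - 2 * (x * y) = (x - y - 1) * (x ^ 2 + y ^ 2 + x - y)) ∧
    (∀ x y : ℝ,
      (x - y) * (x ^ 2 + y ^ 2 - 1) + 2 * (x * y) = (x - y + 1) * (x ^ 2 + y ^ 2 - x + y)) ∧
    (∀ x y : ℝ, x * y ≠ 0 →
      (Psi (x, y) = 2 ↔ y = x - 1 ∨ (x + 1 / 2) ^ 2 + (y - 1 / 2) ^ 2 = 1 / 2)) ∧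
    (∀ x y : ℝ, x * y ≠ 0 →
      (Psi (x, y) = -2 ↔ y = x + 1 ∨ (x - 1 / 2) ^ 2 + (y + 1 / 2) ^ 2 = 1 / 2)) := by
  refine ⟨fun x y => by ring, fun x y => by ring, fun x y h => ?_, fun x y h => ?_⟩
  · unfold Psi
    rw [div_eq_iff h]
    constructor
    · intro heq
      have hfac : (x - y - 1) * (x ^ 2 + y ^ 2 + x - y) = 0 := by nlinarith
      rcases mul_eq_zero.mp hfac with h1 | h2
      · left; linarith
      · right; nlinarith
    · rintro (h1 | h2) <;> nlinarith
  · unfold Psi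
    rw [div_eq_iff h]
    constructor
    · intro heq
      have hfac : (x - y + 1) * (x ^ 2 + y ^ 2 - x + y) = 0 := by nlinarith
      rcases mul_eq_zero.mp hfac with h1 | h2
      · left; linarith
      · right; nlinarith
    · rintro (h1 | h2) <;> nlinarith
end

section
/- For every nonzero x ∈ ℝ such that T is defined at (x,−x) and T is defined at T(x,−x), the point (u,v) = T(T(x,−x)) lies on the line {y = −x} (i.e. u + v = 0) if and only if x = (1/2)·√((1+√17)/2) or x = −(1/2)·√((1+√17)/2). Equivalently, the only nonzero real roots of the polynomial 32x¹⁰ − 6x⁶ + x⁴ − 2x² − 1 are x = ±(1/2)·√((1+√17)/2). -/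
lemma polyroots (x : ℝ) (hx : x ≠ 0) :
    32 * x ^ 10 - 6 * x ^ 6 + x ^ 4 - 2 * x ^ 2 - 1 = 0 ↔
      x = 1 / 2 * Real.sqrt ((1 + Real.sqrt 17) / 2) ∨
      x = -(1 / 2 * Real.sqrt ((1 + Real.sqrt 17) / 2)) := by
  set s := Real.sqrt 17 with hsdef
  have hs : s ^ 2 = 17 := Real.sq_sqrt (by norm_num)
  have hs0 : 0 ≤ s := Real.sqrt_nonneg _
  have hs4 : 4 < s := by nlinarith
  have harg : (0:ℝ) ≤ (1 + s) / 2 := by linarith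
  have hr2 : (1 / 2 * Real.sqrt ((1 + s) / 2)) ^ 2 = (1 + s) / 8 := by
    rw [mul_pow, Real.sq_sqrt harg]; ring
  set r := 1 / 2 * Real.sqrt ((1 + s) / 2) with hrdef
  have hx2 : 0 < x ^ 2 := by positivity
  constructor
  · intro h
    have hfac : (4 * x ^ 4 - x ^ 2 - 1) * (8 * x ^ 6 + 2 * x ^ 4 + x ^ 2 + 1) = 0 := by
      linear_combination h
    have hpos : 0 < 8 * x ^ 6 + 2 * x ^ 4 + x ^ 2 + 1 := by positivity
    have h4 : 4 * x ^ 4 - x ^ 2 - 1 = 0 := by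
      rcases mul_eq_zero.mp hfac with h' | h'
      · exact h'
      · nlinarith
    have hdiff : (8 * x ^ 2 - 1 - s) * (8 * x ^ 2 - 1 + s) = 0 := by
      linear_combination 16 * h4 - hs
    rcases mul_eq_zero.mp hdiff with h' | h'
    · have hfr : (x - r) * (x + r) = 0 := by linear_combination h' / 8 - hr2
      rcases mul_eq_zero.mp hfr with h'' | h''
      · exact Or.inl (by linarith)
      · exact Or.inr (by linarith)
    · nlinarith
  · intro h
    have hx2r : x ^ 2 = (1 + s) / 8 := by
      rcases h with h | h <;> rw [h]
      · exact hr2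
      · rw [neg_pow]; simp [hr2]
    have h4 : 4 * x ^ 4 - x ^ 2 - 1 = 0 := by
      linear_combination (4 * (x ^ 2 + (1 + s) / 8) - 1) * hx2r + hs / 16
    linear_combination (8 * x ^ 6 + 2 * x ^ 4 + x ^ 2 + 1) * h4

/-- For nonzero real `x`, the point `T²(x,-x)` lies on the line `y = -x` exactly when
`x = ±(1/2)√((1+√17)/2)`; equivalently, these are the only nonzero real roots of
`32x¹⁰ - 6x⁶ + x⁴ - 2x² - 1`. -/
theorem T_squared_antidiagonal_return :
    (∀ x : ℝ, x ≠ 0 → tDen x (-x) ≠ 0 → tDen (T (x, -x)).1 (T (x, -x)).2 ≠ 0 →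
      ((T (T (x, -x))).1 + (T (T (x, -x))).2 = 0 ↔
        x = 1 / 2 * Real.sqrt ((1 + Real.sqrt 17) / 2) ∨
        x = -(1 / 2 * Real.sqrt ((1 + Real.sqrt 17) / 2)))) ∧
    (∀ x : ℝ, x ≠ 0 →
      (32 * x ^ 10 - 6 * x ^ 6 + x ^ 4 - 2 * x ^ 2 - 1 = 0 ↔
        x = 1 / 2 * Real.sqrt ((1 + Real.sqrt 17) / 2) ∨
        x = -(1 / 2 * Real.sqrt ((1 + Real.sqrt 17) / 2)))) := by
  refine ⟨?_, fun x hx => polyroots x hx⟩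
  intro x hx h1 h2
  rw [← polyroots x hx]
  have ht : (1:ℝ) + x ^ 2 ≠ 0 := by positivity
  have hd0 : tDen x (-x) ≠ 0 := h1
  have hp : T (x, -x)
      = (-(x ^ 2 * (2 * x ^ 2 + x + 1)) / (1 + x ^ 2),
         -(x ^ 2 * (2 * x ^ 2 - x + 1)) / (1 + x ^ 2)) := by
    have hd : tDen x (-x) = 4 * x ^ 2 * (1 + x ^ 2) := by simp only [tDen]; ring
    have hd' : (4:ℝ) * x ^ 2 * (1 + x ^ 2) ≠ 0 := hd ▸ hd0
    simp only [T, tA, tB, Prod.mk.injEq]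
    rw [hd]
    constructor <;> (field_simp; ring)
  rw [hp] at h2 ⊢
  set u : ℝ := -(x ^ 2 * (2 * x ^ 2 + x + 1)) / (1 + x ^ 2) with hu
  set v : ℝ := -(x ^ 2 * (2 * x ^ 2 - x + 1)) / (1 + x ^ 2) with hv
  have hsum : (T (u, v)).1 + (T (u, v)).2
      = (-16 * x ^ 8) * (32 * x ^ 10 - 6 * x ^ 6 + x ^ 4 - 2 * x ^ 2 - 1)
        / ((1 + x ^ 2) ^ 4 * tDen u v) := by
    simp only [T, tA, tB]
    rw [hu, hv]
    field_simp
    ring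
  have hden : (1 + x ^ 2) ^ 4 * tDen u v ≠ 0 := mul_ne_zero (pow_ne_zero _ ht) h2
  have hcoef : (-16:ℝ) * x ^ 8 ≠ 0 := mul_ne_zero (by norm_num) (pow_ne_zero _ hx)
  rw [hsum, div_eq_zero_iff]
  constructor
  · rintro (h0 | h0)
    · exact (mul_eq_zero.mp h0).resolve_left hcoef
    · exact absurd h0 hden
  · intro h0; left; rw [h0, mul_zero]
end

section
/- Forward rigidity for dihedral octagons with symmetry lines through the vertices: suppose (x,y) ∈ ℝ² is such that P(x,y) is convex. Then x = y if and only if there exists a sequence (p_j)_{j≥0} of points of ℝ² with p_0 = (x,y) such that, for every j ≥ 0, T is defined at p_j, T(p_j) = p_{j+1}, and P(p_j) is convex. -/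
/-- The vertices of the octagon `P(x,y)` with 4-fold rotational symmetry. -/
def octVerts (x y : ℝ) : Fin 8 → ℝ × ℝ :=
  ![(1, 0), (x, y), (0, 1), (-y, x), (-1, 0), (-x, -y), (0, -1), (y, -x)]

/-- Cross product (2x2 determinant) of two planar vectors. -/
def cross2 (a b : ℝ × ℝ) : ℝ := a.1 * b.2 - a.2 * b.1

/-- The octagon `P(x,y)` is convex: each successive cross product is positive. -/
def ConvexOct (x y : ℝ) : Prop :=
  ∀ i : Fin 8,
    0 < cross2 (octVerts x y (i + 1) - octVerts x y i)
        (octVerts x y (i + 2) - octVerts x y (i + 1))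

/- ### Auxiliary lemmas -/

lemma fr_convexOct_iff (x y : ℝ) :
    ConvexOct x y ↔ 1 < x + y ∧ x ^ 2 + y ^ 2 < x + y := by
  have e : ∀ (a b c : ℝ × ℝ), cross2 (b - a) (c - b)
      = (b.1 - a.1) * (c.2 - b.2) - (b.2 - a.2) * (c.1 - b.1) := by
    intro a b c; rfl
  constructor
  · intro h
    have h0 := h 0
    have h1 := h 1
    rw [show ((0:Fin 8)+1) = 1 from rfl, show ((0:Fin 8)+2) = 2 from rfl,
      show octVerts x y 0 = (1,0) from rfl, show octVerts x y 1 = (x,y) from rfl,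
      show octVerts x y 2 = (0,1) from rfl, e] at h0
    rw [show ((1:Fin 8)+1) = 2 from rfl, show ((1:Fin 8)+2) = 3 from rfl,
      show octVerts x y 1 = (x,y) from rfl, show octVerts x y 2 = (0,1) from rfl,
      show octVerts x y 3 = (-y,x) from rfl, e] at h1
    simp only at h0 h1
    constructor <;> nlinarith [h0, h1]
  · rintro ⟨h1, h2⟩ i
    fin_cases i
    · show (0:ℝ) < cross2 ((x,y)-(1,0)) ((0,1)-(x,y))
      simp only [cross2, Prod.sub_def]; nlinarith
    · show (0:ℝ) < cross2 ((0,1)-(x,y)) ((-y,x)-(0,1))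
      simp only [cross2, Prod.sub_def]; nlinarith
    · show (0:ℝ) < cross2 ((-y,x)-(0,1)) ((-1,0)-(-y,x))
      simp only [cross2, Prod.sub_def]; nlinarith
    · show (0:ℝ) < cross2 ((-1,0)-(-y,x)) ((-x,-y)-(-1,0))
      simp only [cross2, Prod.sub_def]; nlinarith
    · show (0:ℝ) < cross2 ((-x,-y)-(-1,0)) ((0,-1)-(-x,-y))
      simp only [cross2, Prod.sub_def]; nlinarith
    · show (0:ℝ) < cross2 ((0,-1)-(-x,-y)) ((y,-x)-(0,-1))
      simp only [cross2, Prod.sub_def]; nlinarith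
    · show (0:ℝ) < cross2 ((y,-x)-(0,-1)) ((1,0)-(y,-x))
      simp only [cross2, Prod.sub_def]; nlinarith
    · show (0:ℝ) < cross2 ((1,0)-(y,-x)) ((x,y)-(1,0))
      simp only [cross2, Prod.sub_def]; nlinarith

lemma fr_pos {x y : ℝ} (h1 : 1 < x + y) (h2 : x ^ 2 + y ^ 2 < x + y) :
    0 < x ∧ 0 < y := by
  constructor <;> nlinarith [sq_nonneg x, sq_nonneg y, sq_nonneg (x-1), sq_nonneg (y-1)]

lemma fr_den_pos {x y : ℝ} (h1 : 1 < x + y) (h2 : x ^ 2 + y ^ 2 < x + y) :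
    0 < tDen x y := by
  obtain ⟨hx, hy⟩ := fr_pos h1 h2
  have hf : (0:ℝ) < (x ^ 2 + y ^ 2) + 2 * (x ^ 3 + y ^ 3) + (x ^ 4 + y ^ 4)
      - 2 * (x * y) - 2 * (x * y ^ 2 + y * x ^ 2) + 2 * (x ^ 2 * y ^ 2) := by
    nlinarith [sq_nonneg (x^2-y), sq_nonneg (y^2-x), mul_pos hx hy,
      mul_pos (mul_pos hx hy) (sub_pos.2 h1), sq_nonneg (x-y)]
  have h1' : (0:ℝ) < 1 + (x + y) := by linarith
  exact mul_pos h1' hf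

lemma fr_T_sum (x y : ℝ) (h : tDen x y ≠ 0) :
    (T (x,y)).1 + (T (x,y)).2
      = (((x+y)+(x^2+y^2)) * (2*(x*y)*(x+y) - (x-y)^2*(1+2*(x+y)+(x^2+y^2)))) / tDen x y := by
  simp only [T, tA, tB]
  field_simp
  ring

lemma fr_T_diff (x y : ℝ) (h : tDen x y ≠ 0) :
    (T (x,y)).1 - (T (x,y)).2
      = -((x-y) * (((x+y)+(x^2+y^2)) * ((x+y)+2*(x+y)^2+(x+y)*(x^2+y^2)-2*(x*y)))) / tDen x y := by
  simp only [T, tA, tB]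
  field_simp
  ring

lemma fr_key {x y : ℝ} (hx : 0 < x) (hy : 0 < y) (h1 : 1 < x + y) (h2 : x^2+y^2 < x+y)
    (hS : tDen x y
      < ((x+y)+(x^2+y^2)) * (2*(x*y)*(x+y) - (x-y)^2*(1+2*(x+y)+(x^2+y^2)))) :
    2 * tDen x y ≤ ((x+y)+(x^2+y^2)) * ((x+y)+2*(x+y)^2+(x+y)*(x^2+y^2)-2*(x*y)) := by
  simp only [tDen] at hS ⊢
  nlinarith [sq_nonneg (x-y), mul_pos hx hy, sq_nonneg (x+y-1), mul_pos (mul_pos hx hy) (sub_pos.2 h1),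
    sq_nonneg (x*y-1), mul_nonneg (sq_nonneg (x-y)) (le_of_lt (mul_pos hx hy)),
    mul_nonneg (sq_nonneg (x-y)) (sub_pos.2 h1).le]

/-- The expansion step: if both an octagon and its image are convex, the
asymmetry `|x - y|` at least doubles. -/
lemma fr_step {x y : ℝ} (hc : ConvexOct x y)
    (hc' : ConvexOct (T (x,y)).1 (T (x,y)).2) :
    2 * |x - y| ≤ |(T (x,y)).1 - (T (x,y)).2| := by
  obtain ⟨h1, h2⟩ := (fr_convexOct_iff x y).1 hc
  obtain ⟨hx, hy⟩ := fr_pos h1 h2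
  have hden : 0 < tDen x y := fr_den_pos h1 h2
  have hS1 : 1 < (T (x,y)).1 + (T (x,y)).2 := ((fr_convexOct_iff _ _).1 hc').1
  rw [fr_T_sum x y hden.ne'] at hS1
  have hS : tDen x y
      < ((x+y)+(x^2+y^2)) * (2*(x*y)*(x+y) - (x-y)^2*(1+2*(x+y)+(x^2+y^2))) :=
    (one_lt_div hden).1 hS1
  have hM : 2 * tDen x y
      ≤ ((x+y)+(x^2+y^2)) * ((x+y)+2*(x+y)^2+(x+y)*(x^2+y^2)-2*(x*y)) :=
    fr_key hx hy h1 h2 hS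
  set M : ℝ := ((x+y)+(x^2+y^2)) * ((x+y)+2*(x+y)^2+(x+y)*(x^2+y^2)-2*(x*y)) with hMdef
  have hMpos : 0 < M := by linarith
  rw [fr_T_diff x y hden.ne']
  rw [abs_div, abs_neg, abs_mul, abs_of_pos hMpos, abs_of_pos hden]
  rw [le_div_iff₀ hden]
  nlinarith [mul_le_mul_of_nonneg_left hM (abs_nonneg (x - y))]

lemma fr_bound {x y : ℝ} (hc : ConvexOct x y) : |x - y| < 1 := by
  obtain ⟨h1, h2⟩ := (fr_convexOct_iff x y).1 hc
  rw [abs_lt]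
  constructor <;> nlinarith [sq_nonneg (x+y-1)]

lemma fr_T_diag (t : ℝ) (h : tDen t t ≠ 0) :
    T (t,t) = ((1+t)/(1+2*t), (1+t)/(1+2*t)) := by
  have e : tDen t t = (1+2*t)*(4*t^4) := by simp only [tDen]; ring
  have h2 : (1+2*t) ≠ 0 := by intro h0; apply h; rw [e, h0]; ring
  have ht : t ≠ 0 := by intro h0; apply h; rw [e, h0]; ring
  simp only [T, tA, tB, Prod.mk.injEq]
  rw [e]
  constructor <;> (field_simp; ring)

lemma fr_tDen_diag_pos {t : ℝ} (ht : 1/2 < t) : 0 < tDen t t := by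
  have e : tDen t t = (1+2*t)*(4*t^4) := by simp only [tDen]; ring
  rw [e]
  have : (0:ℝ) < t := by linarith
  positivity

/-- Forward rigidity: a convex `P(x,y)` has `x = y` (8-fold dihedral symmetry with
symmetry lines through the vertices) iff it has a full forward `T`-orbit of convex
octagons. -/
theorem forward_rigidity (x y : ℝ) (hconv : ConvexOct x y) :
    x = y ↔
      ∃ p : ℕ → ℝ × ℝ, p 0 = (x, y) ∧
        ∀ j : ℕ, tDen (p j).1 (p j).2 ≠ 0 ∧ T (p j) = p (j + 1) ∧
          ConvexOct (p j).1 (p j).2 := by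
  constructor
  · rintro rfl
    -- the diagonal case: iterate T, staying on the diagonal segment (1/2, 1)
    obtain ⟨h1, h2⟩ := (fr_convexOct_iff x x).1 hconv
    have hx1 : 1/2 < x := by linarith
    have hx2 : x < 1 := by nlinarith
    refine ⟨fun n => T^[n] (x, x), by simp, ?_⟩
    have inv : ∀ n : ℕ, ∃ t : ℝ, T^[n] (x, x) = (t, t) ∧ 1/2 < t ∧ t < 1 := by
      intro n
      induction n with
      | zero => exact ⟨x, rfl, hx1, hx2⟩
      | succ k ih =>
        obtain ⟨t, ht, ht1, ht2⟩ := ih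
        have hpos : 0 < tDen t t := fr_tDen_diag_pos ht1
        have ht0 : (0:ℝ) < 1 + 2*t := by linarith
        refine ⟨(1+t)/(1+2*t), ?_, ?_, ?_⟩
        · rw [Function.iterate_succ_apply', ht, fr_T_diag t hpos.ne']
        · rw [lt_div_iff₀ ht0]; linarith
        · rw [div_lt_one ht0]; linarith
    intro j
    obtain ⟨t, ht, ht1, ht2⟩ := inv j
    have hpos : 0 < tDen t t := fr_tDen_diag_pos ht1
    refine ⟨?_, ?_, ?_⟩
    · show tDen (T^[j] (x,x)).1 (T^[j] (x,x)).2 ≠ 0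
      rw [ht]; exact hpos.ne'
    · show T (T^[j] (x,x)) = T^[j+1] (x,x)
      rw [Function.iterate_succ_apply']
    · show ConvexOct (T^[j] (x,x)).1 (T^[j] (x,x)).2
      rw [ht]
      rw [fr_convexOct_iff]
      constructor <;> nlinarith
  · rintro ⟨p, hp0, hp⟩
    by_contra hne
    have hd0 : 0 < |x - y| := abs_pos.2 (sub_ne_zero.2 hne)
    -- the asymmetry doubles at each step
    have grow : ∀ j : ℕ, 2 ^ j * |x - y| ≤ |(p j).1 - (p j).2| := by
      intro j
      induction j with
      | zero => simp [hp0]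
      | succ k ih =>
        obtain ⟨hden, hT, hc⟩ := hp k
        have hc' : ConvexOct (T ((p k).1, (p k).2)).1 (T ((p k).1, (p k).2)).2 := by
          have : ((p k).1, (p k).2) = p k := rfl
          rw [this, hT]
          exact (hp (k+1)).2.2
        have hstep := fr_step hc hc'
        have : T ((p k).1, (p k).2) = p (k+1) := hT
        rw [this] at hstep
        calc 2 ^ (k+1) * |x - y| = 2 * (2 ^ k * |x - y|) := by ring
          _ ≤ 2 * |(p k).1 - (p k).2| := by linarith
          _ ≤ |(p (k+1)).1 - (p (k+1)).2| := hstep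
    -- but it is bounded by 1, contradiction
    obtain ⟨n, hn⟩ := pow_unbounded_of_one_lt (1 / |x - y|) (one_lt_two (α := ℝ))
    have hb : |(p n).1 - (p n).2| < 1 := fr_bound (hp n).2.2
    have := grow n
    have h1n : 1 < 2 ^ n * |x - y| := by
      rw [div_lt_iff₀ hd0] at hn
      linarith
    linarith
end
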